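/- arXiv:2410.04674 — 11 statements merged into one kernel-verified Lean document; each statement's English description precedes it below -/
import Mathlib

section
/- Let (X,d) be a quasi-metric space and let {(x_i,r_i)}_{i∈D} be a directed subset of BX, viewed as a monotone net indexed by itself. If x ∈ X is a Yoneda limit of the net {x_i}_{i∈D} and r = inf_{i∈D} r_i, then (x,r) is the least upper bound of {(x_i,r_i)}_{i∈D} in BX. -/
open scoped ENNReal NNReal

universe u v w

/-- A quasi-metric space structure on `X`: distances valued in `[0,∞]`, with
`d x x = 0`, the triangle inequality, and separatedness. -/
structure QuasiMetric (X : Type u) where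
  d : X → X → ℝ≥0∞
  d_self : ∀ x, d x x = 0
  d_triangle : ∀ x y z, d x z ≤ d x y + d y z
  d_separated : ∀ x y, d x y = 0 → d y x = 0 → x = y

namespace QuasiMetric

variable {X : Type u}

/-- The order on formal balls: `(x, r) ⊑ (y, s)` iff `s + d x y ≤ r`
(equivalently `d x y ≤ r - s`). -/
def ballLE (q : QuasiMetric X) (p p' : X × ℝ≥0) : Prop :=
  (p'.2 : ℝ≥0∞) + q.d p.1 p'.1 ≤ (p.2 : ℝ≥0∞)

/-- `b` is a least upper bound of the set `S` of formal balls. -/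
def IsBallLUB (q : QuasiMetric X) (S : Set (X × ℝ≥0)) (b : X × ℝ≥0) : Prop :=
  (∀ p ∈ S, q.ballLE p b) ∧ ∀ c, (∀ p ∈ S, q.ballLE p c) → q.ballLE b c

/-- `le` is a directed preorder (reflexive, transitive, directed). -/
def DirectedPre {D : Type v} (le : D → D → Prop) : Prop :=
  (∀ i, le i i) ∧ (∀ i j k, le i j → le j k → le i k) ∧ ∀ i j, ∃ k, le i k ∧ le j k

/-- A net `x : D → X` is forward Cauchy: `inf_i sup_{k ≥ j ≥ i} d (x j) (x k) = 0`. -/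
def ForwardCauchy (q : QuasiMetric X) {D : Type v} (le : D → D → Prop) (x : D → X) : Prop :=
  (⨅ i, ⨆ j, ⨆ (_ : le i j), ⨆ k, ⨆ (_ : le j k), q.d (x j) (x k)) = 0

/-- `a` is a Yoneda limit of the net `x : D → X`:
for all `y`, `d a y = inf_i sup_{j ≥ i} d (x j) y`. -/
def IsYonedaLimit (q : QuasiMetric X) {D : Type v} (le : D → D → Prop) (x : D → X) (a : X) :
    Prop :=
  ∀ y, q.d a y = ⨅ i, ⨆ j, ⨆ (_ : le i j), q.d (x j) y

/-- `(X, d)` is Yoneda complete: every forward Cauchy net has a Yoneda limit. -/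
def YonedaComplete (q : QuasiMetric X) : Prop :=
  ∀ (D : Type u) (le : D → D → Prop), DirectedPre le → Nonempty D →
    ∀ x : D → X, q.ForwardCauchy le x → ∃ a, q.IsYonedaLimit le x a

/-- `(X, d)` is standard: whenever a directed set of formal balls (viewed as a monotone
net indexed by itself) has a least upper bound, the corresponding forward Cauchy net of
centers has a Yoneda limit. -/
def Standard (q : QuasiMetric X) : Prop :=
  ∀ S : Set (X × ℝ≥0), S.Nonempty → DirectedOn q.ballLE S →
    (∃ b, q.IsBallLUB S b) →
    ∃ a, q.IsYonedaLimit (fun p p' : ↥S => q.ballLE p.1 p'.1) (fun p : ↥S => p.1.1) a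

/-- A weight of `(X, d)`: `φ x ≤ φ y + d x y`. -/
def IsWeight (q : QuasiMetric X) (φ : X → ℝ≥0∞) : Prop :=
  ∀ x y, φ x ≤ φ y + q.d x y

/-- The quasi-metric on weights: `ρ(φ, ψ) = sup_y (ψ y ⊖ φ y)`. -/
noncomputable def rho {Y : Type v} (φ ψ : Y → ℝ≥0∞) : ℝ≥0∞ := ⨆ y, ψ y - φ y

/-- An ideal of `(X, d)`: a weight `φ` with `inf φ = 0` such that
`ρ(φ, min (λ, μ)) = min (ρ(φ,λ), ρ(φ,μ))` for all weights `λ`, `μ`. -/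
def IsIdeal (q : QuasiMetric X) (φ : X → ℝ≥0∞) : Prop :=
  q.IsWeight φ ∧ (⨅ x, φ x) = 0 ∧
    ∀ l m : X → ℝ≥0∞, q.IsWeight l → q.IsWeight m →
      rho φ (fun x => min (l x) (m x)) = min (rho φ l) (rho φ m)

/-- A weight `φ` is bounded: there are `r < ∞` and `a ∈ X` with `d x a ≤ r + φ x` for all `x`. -/
def BoundedWeight (q : QuasiMetric X) (φ : X → ℝ≥0∞) : Prop :=
  ∃ (r : ℝ≥0) (a : X), ∀ x, q.d x a ≤ (r : ℝ≥0∞) + φ x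

/-- `b` is a colimit of the weight `φ`: for all `y`, `d b y = sup_x (d x y ⊖ φ x)`. -/
def IsColimit (q : QuasiMetric X) (φ : X → ℝ≥0∞) (b : X) : Prop :=
  ∀ y, q.d b y = ⨆ x, q.d x y - φ x

/-- The poset of formal balls is a dcpo: every (nonempty) directed subset has a lub. -/
def BallDcpo (q : QuasiMetric X) : Prop :=
  ∀ S : Set (X × ℝ≥0), S.Nonempty → DirectedOn q.ballLE S → ∃ b, q.IsBallLUB S b

/-- The poset of formal balls is a local dcpo: every (nonempty) directed subset with an
upper bound has a lub. -/
def BallLocalDcpo (q : QuasiMetric X) : Prop :=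
  ∀ S : Set (X × ℝ≥0), S.Nonempty → DirectedOn q.ballLE S →
    (∃ c, ∀ p ∈ S, q.ballLE p c) → ∃ b, q.IsBallLUB S b

/-- `u` is way below `v` in the poset of formal balls. -/
def ballWayBelow (q : QuasiMetric X) (u v : X × ℝ≥0) : Prop :=
  ∀ S : Set (X × ℝ≥0), S.Nonempty → DirectedOn q.ballLE S →
    ∀ s, q.IsBallLUB S s → q.ballLE v s → ∃ p ∈ S, q.ballLE u p

/-- The poset of formal balls is a continuous poset: for every `p`, the set of elements
way below `p` is (nonempty) directed and has `p` as its least upper bound. -/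
def BallContinuousPoset (q : QuasiMetric X) : Prop :=
  ∀ p : X × ℝ≥0,
    {u : X × ℝ≥0 | q.ballWayBelow u p}.Nonempty ∧
    DirectedOn q.ballLE {u : X × ℝ≥0 | q.ballWayBelow u p} ∧
    q.IsBallLUB {u : X × ℝ≥0 | q.ballWayBelow u p} p

/-- A function `χ` is `𝓙`-closed: `ρ(ψ, χ) ≥ χ (colim ψ)` for every bounded ideal `ψ`
possessing a colimit. -/
def JClosed (q : QuasiMetric X) (χ : X → ℝ≥0∞) : Prop :=
  ∀ ψ : X → ℝ≥0∞, q.IsIdeal ψ → q.BoundedWeight ψ → ∀ c, q.IsColimit ψ c → χ c ≤ rho ψ χ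

/-- `(X, d)` is a continuous `𝕁`-algebra: every bounded ideal has a colimit, and there is
a map `⇓` assigning to each `x` a bounded ideal `⇓x` with `ρ(⇓x, φ) = d x (colim φ)` for
all `x` and all bounded ideals `φ`. -/
def ContinuousJAlgebra (q : QuasiMetric X) : Prop :=
  ∃ colim : (X → ℝ≥0∞) → X,
    (∀ φ, q.IsIdeal φ → q.BoundedWeight φ → q.IsColimit φ (colim φ)) ∧
    ∃ w : X → X → ℝ≥0∞,
      (∀ x, q.IsIdeal (w x) ∧ q.BoundedWeight (w x)) ∧
      ∀ (x : X) (φ : X → ℝ≥0∞), q.IsIdeal φ → q.BoundedWeight φ →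
        rho (w x) φ = q.d x (colim φ)

/-- The quasi-metric space of all functions `X → [0,∞]` satisfying a predicate `P`
(e.g. the bounded weights, or the bounded ideals), with the quasi-metric
`ρ(φ, ψ) = sup_x (ψ x ⊖ φ x)`. -/
noncomputable def weightSpace (q : QuasiMetric X) (P : (X → ℝ≥0∞) → Prop) :
    QuasiMetric {φ : X → ℝ≥0∞ // P φ} where
  d φ ψ := rho φ.1 ψ.1
  d_self φ := by simp [rho]
  d_triangle φ ψ χ := by
    refine iSup_le fun x => ?_
    calc χ.1 x - φ.1 x ≤ (χ.1 x - ψ.1 x) + (ψ.1 x - φ.1 x) := tsub_le_tsub_add_tsub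
    _ ≤ rho ψ.1 χ.1 + rho φ.1 ψ.1 :=
        add_le_add (le_iSup (fun y => χ.1 y - ψ.1 y) x) (le_iSup (fun y => ψ.1 y - φ.1 y) x)
    _ = rho φ.1 ψ.1 + rho ψ.1 χ.1 := add_comm _ _
  d_separated φ ψ h1 h2 := by
    apply Subtype.ext
    funext x
    have hx1 : ψ.1 x - φ.1 x ≤ 0 := by
      rw [← h1]; exact le_iSup (fun y => ψ.1 y - φ.1 y) x
    have hx2 : φ.1 x - ψ.1 x ≤ 0 := by
      rw [← h2]; exact le_iSup (fun y => φ.1 y - ψ.1 y) x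
    exact le_antisymm (tsub_eq_zero_iff_le.mp (le_antisymm hx2 zero_le))
      (tsub_eq_zero_iff_le.mp (le_antisymm hx1 zero_le))

end QuasiMetric

open QuasiMetric in
/-- if `x` is a Yoneda limit of the net of centers of a directed set of
formal balls (indexed by itself) and `r = inf_i r_i`, then `(x, r)` is the least upper
bound of the directed set in `BX`. -/
theorem stmt0 {X : Type u} (q : QuasiMetric X) {D : Type v}
    (le : D → D → Prop) (hne : Nonempty D)
    (hdir : ∀ i j, ∃ k, le i k ∧ le j k)
    (x : D → X) (r : D → ℝ≥0)
    (hord : ∀ i j, le i j ↔ q.ballLE (x i, r i) (x j, r j))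
    (a : X) (ha : q.IsYonedaLimit le x a) :
    q.IsBallLUB (Set.range fun i => (x i, r i)) (a, ⨅ i, r i) := by
  have hrefl : ∀ i, le i i := fun i => (hord i i).mpr (by
    simp [QuasiMetric.ballLE, q.d_self])
  have hza : (⨅ k, ⨆ j, ⨆ _ : le k j, q.d (x j) a) = 0 := by
    rw [← ha a, q.d_self]
  constructor
  · rintro p ⟨i, rfl⟩
    show ((⨅ i, r i : ℝ≥0) : ℝ≥0∞) + q.d (x i) a ≤ (r i : ℝ≥0∞)
    have key : ∀ k, ((⨅ i, r i : ℝ≥0) : ℝ≥0∞) + q.d (x i) a ≤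
        (r i : ℝ≥0∞) + ⨆ j, ⨆ _ : le k j, q.d (x j) a := by
      intro k
      obtain ⟨j, hij, hkj⟩ := hdir i k
      have hlej : (r j : ℝ≥0∞) + q.d (x i) (x j) ≤ (r i : ℝ≥0∞) := (hord i j).mp hij
      calc ((⨅ i, r i : ℝ≥0) : ℝ≥0∞) + q.d (x i) a
          ≤ (r j : ℝ≥0∞) + q.d (x i) a := by
            gcongr
            exact_mod_cast ciInf_le (OrderBot.bddBelow _) j
        _ ≤ (r j : ℝ≥0∞) + (q.d (x i) (x j) + q.d (x j) a) := by
            gcongr; exact q.d_triangle _ _ _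
        _ = ((r j : ℝ≥0∞) + q.d (x i) (x j)) + q.d (x j) a := by ring
        _ ≤ (r i : ℝ≥0∞) + q.d (x j) a := by gcongr
        _ ≤ (r i : ℝ≥0∞) + ⨆ j, ⨆ _ : le k j, q.d (x j) a := by
            gcongr
            exact le_iSup₂ (f := fun j (_ : le k j) => q.d (x j) a) j hkj
    calc ((⨅ i, r i : ℝ≥0) : ℝ≥0∞) + q.d (x i) a
        ≤ ⨅ k, ((r i : ℝ≥0∞) + ⨆ j, ⨆ _ : le k j, q.d (x j) a) := le_iInf key
      _ = (r i : ℝ≥0∞) + ⨅ k, ⨆ j, ⨆ _ : le k j, q.d (x j) a := by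
            rw [ENNReal.add_iInf]
      _ = (r i : ℝ≥0∞) := by rw [hza, add_zero]
  · rintro ⟨y, s⟩ hc
    show (s : ℝ≥0∞) + q.d a y ≤ ((⨅ i, r i : ℝ≥0) : ℝ≥0∞)
    rw [ENNReal.coe_iInf]
    refine le_iInf fun i => ?_
    have hci : (s : ℝ≥0∞) + q.d (x i) y ≤ (r i : ℝ≥0∞) :=
      hc (x i, r i) ⟨i, rfl⟩
    have hsi : (s : ℝ≥0∞) ≤ (r i : ℝ≥0∞) := le_self_add.trans hci
    have hd : q.d a y ≤ (r i : ℝ≥0∞) - s := by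
      rw [ha y]
      refine (iInf_le _ i).trans (iSup₂_le fun j hij => ?_)
      have hlej : (r j : ℝ≥0∞) + q.d (x i) (x j) ≤ (r i : ℝ≥0∞) := (hord i j).mp hij
      have hrj : (r j : ℝ≥0∞) ≤ (r i : ℝ≥0∞) := le_self_add.trans hlej
      have hcj : (s : ℝ≥0∞) + q.d (x j) y ≤ (r j : ℝ≥0∞) := hc (x j, r j) ⟨j, rfl⟩
      exact ENNReal.le_sub_of_add_le_left ENNReal.coe_ne_top (hcj.trans hrj)
    calc (s : ℝ≥0∞) + q.d a y ≤ (s : ℝ≥0∞) + ((r i : ℝ≥0∞) - s) := by gcongr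
      _ = (r i : ℝ≥0∞) := add_tsub_cancel_of_le hsi
end

section
/- Let (X,d) be a quasi-metric space and let {(x_i,r_i)}_{i∈D} be a directed subset of BX, viewed as a monotone net indexed by itself. Suppose (i) inf_{i∈D} r_i = 0, (ii) (b,0) is a least upper bound of {(x_i,r_i)}_{i∈D} in BX, and (iii) for each t < ∞ the directed set {(x_i, t + r_i)}_{i∈D} has a least upper bound in BX. Then b is a Yoneda limit of the forward Cauchy net {x_i}_{i∈D}. -/
open scoped ENNReal NNReal

universe u v w

open QuasiMetric in
/-- if a directed set of formal balls (indexed by itself) has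
`inf_i r_i = 0`, `(b, 0)` as a least upper bound, and each shifted directed set
`{(x_i, t + r_i)}` has a least upper bound, then `b` is a Yoneda limit of the
forward Cauchy net `{x_i}`. -/
theorem stmt1 {X : Type u} (q : QuasiMetric X) {D : Type v}
    (le : D → D → Prop) (hne : Nonempty D)
    (hdir : ∀ i j, ∃ k, le i k ∧ le j k)
    (x : D → X) (r : D → ℝ≥0)
    (hord : ∀ i j, le i j ↔ q.ballLE (x i, r i) (x j, r j))
    (hinf : (⨅ i, r i) = 0)
    (b : X) (hb : q.IsBallLUB (Set.range fun i => (x i, r i)) (b, 0))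
    (ht : ∀ t : ℝ≥0, ∃ c, q.IsBallLUB (Set.range fun i => (x i, t + r i)) c) :
    q.IsYonedaLimit le x b := by
  intro y
  haveI := hne
  set L := ⨅ i, ⨆ j, ⨆ (_ : le i j), q.d (x j) y with hL
  have hle' : ∀ i j, le i j → (r j : ℝ≥0∞) + q.d (x i) (x j) ≤ (r i : ℝ≥0∞) :=
    fun i j h => (hord i j).mp h
  have hrle : ∀ i j, le i j → (r j : ℝ≥0∞) ≤ (r i : ℝ≥0∞) :=
    fun i j h => le_trans (le_add_right le_rfl) (hle' i j h)
  have hxb : ∀ i, q.d (x i) b ≤ (r i : ℝ≥0∞) := by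
    intro i
    have := hb.1 (x i, r i) ⟨i, rfl⟩
    simpa [QuasiMetric.ballLE] using this
  have hinf' : (⨅ i, (r i : ℝ≥0∞)) = 0 := by
    rw [← ENNReal.coe_iInf]
    exact_mod_cast congrArg ((↑·) : ℝ≥0 → ℝ≥0∞) hinf
  have h1 : L ≤ q.d b y := by
    have key : ∀ i, (⨆ j, ⨆ (_ : le i j), q.d (x j) y) ≤ (r i : ℝ≥0∞) + q.d b y := by
      intro i
      refine iSup_le fun j => iSup_le fun hij => ?_
      calc q.d (x j) y ≤ q.d (x j) b + q.d b y := q.d_triangle _ _ _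
        _ ≤ (r j : ℝ≥0∞) + q.d b y := add_le_add_left (hxb j) _
        _ ≤ (r i : ℝ≥0∞) + q.d b y := add_le_add_left (hrle i j hij) _
    have hz : L - q.d b y ≤ 0 := by
      rw [← hinf']
      refine le_iInf fun i => tsub_le_iff_right.mpr ?_
      exact le_trans (iInf_le _ i) (key i)
    have hz' : L - q.d b y = 0 := le_antisymm hz zero_le
    exact tsub_eq_zero_iff_le.mp hz'
  have h2 : ∀ t : ℝ≥0, L < (t : ℝ≥0∞) → q.d b y ≤ (t : ℝ≥0∞) := by
    intro t hLt
    obtain ⟨i₀, hi₀⟩ : ∃ i, (⨆ j, ⨆ (_ : le i j), q.d (x j) y) < (t : ℝ≥0∞) :=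
      iInf_lt_iff.mp hLt
    have hi₀' : ∀ j, le i₀ j → q.d (x j) y ≤ (t : ℝ≥0∞) := by
      intro j hj
      exact le_of_lt (lt_of_le_of_lt (le_iSup_of_le j (le_iSup (fun _ => q.d (x j) y) hj)) hi₀)
    obtain ⟨⟨c₁, c₂⟩, hc⟩ := ht t
    have hub : ∀ i, (c₂ : ℝ≥0∞) + q.d (x i) c₁ ≤ (t : ℝ≥0∞) + (r i : ℝ≥0∞) := by
      intro i
      have := hc.1 (x i, t + r i) ⟨i, rfl⟩
      simpa [QuasiMetric.ballLE, ENNReal.coe_add] using this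
    have hc2t : (c₂ : ℝ≥0∞) ≤ (t : ℝ≥0∞) := by
      have hz : (c₂ : ℝ≥0∞) - (t : ℝ≥0∞) ≤ 0 := by
        rw [← hinf']
        refine le_iInf fun i => tsub_le_iff_left.mpr ?_
        exact le_trans (le_add_right le_rfl) (hub i)
      exact tsub_eq_zero_iff_le.mp (le_antisymm hz zero_le)
    have hbt_ub : ∀ p ∈ Set.range (fun i => (x i, t + r i)), q.ballLE p (b, t) := by
      rintro p ⟨i, rfl⟩
      show (t : ℝ≥0∞) + q.d (x i) b ≤ ((t + r i : ℝ≥0) : ℝ≥0∞)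
      rw [ENNReal.coe_add]
      exact add_le_add_right (hxb i) _
    have htc2 : (t : ℝ≥0∞) + q.d c₁ b ≤ (c₂ : ℝ≥0∞) := hc.2 (b, t) hbt_ub
    have hc2 : (c₂ : ℝ≥0∞) = (t : ℝ≥0∞) :=
      le_antisymm hc2t (le_trans (le_add_right le_rfl) htc2)
    have hdc1b : q.d c₁ b = 0 := by
      have h' : (t : ℝ≥0∞) + q.d c₁ b ≤ (t : ℝ≥0∞) + 0 := by
        rw [add_zero]; exact htc2.trans hc2.le
      exact le_antisymm ((ENNReal.add_le_add_iff_left ENNReal.coe_ne_top).mp h') zero_le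
    have hxic1 : ∀ i, q.d (x i) c₁ ≤ (r i : ℝ≥0∞) := by
      intro i
      have h' := hub i
      rw [hc2] at h'
      exact (ENNReal.add_le_add_iff_left ENNReal.coe_ne_top).mp h'
    have hbc1 : q.d b c₁ = 0 := by
      have hub0 : ∀ p ∈ Set.range (fun i => (x i, r i)), q.ballLE p (c₁, 0) := by
        rintro p ⟨i, rfl⟩
        show ((0 : ℝ≥0) : ℝ≥0∞) + q.d (x i) c₁ ≤ (r i : ℝ≥0∞)
        simpa using hxic1 i
      have := hb.2 (c₁, 0) hub0
      simp only [QuasiMetric.ballLE, ENNReal.coe_zero, zero_add] at this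
      exact le_antisymm this zero_le
    have hbc : b = c₁ := q.d_separated b c₁ hbc1 hdc1b
    have hy_ub : ∀ p ∈ Set.range (fun i => (x i, t + r i)), q.ballLE p (y, 0) := by
      rintro p ⟨i, rfl⟩
      show ((0 : ℝ≥0) : ℝ≥0∞) + q.d (x i) y ≤ ((t + r i : ℝ≥0) : ℝ≥0∞)
      rw [ENNReal.coe_zero, zero_add, ENNReal.coe_add]
      obtain ⟨k, hik, hi0k⟩ := hdir i i₀
      calc q.d (x i) y ≤ q.d (x i) (x k) + q.d (x k) y := q.d_triangle _ _ _
        _ ≤ (r i : ℝ≥0∞) + (t : ℝ≥0∞) := by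
            refine add_le_add ?_ (hi₀' k hi0k)
            exact le_trans (le_add_left le_rfl) (hle' i k hik)
        _ = (t : ℝ≥0∞) + (r i : ℝ≥0∞) := add_comm _ _
    have hcy : ((0 : ℝ≥0) : ℝ≥0∞) + q.d c₁ y ≤ (c₂ : ℝ≥0∞) := hc.2 (y, 0) hy_ub
    rw [ENNReal.coe_zero, zero_add, hc2] at hcy
    rw [hbc]
    exact hcy
  refine le_antisymm ?_ h1
  by_contra hcon
  push_neg at hcon
  obtain ⟨s, hs1, hs2⟩ := (ENNReal.lt_iff_exists_nnreal_btwn).mp hcon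
  exact absurd (h2 s hs1) (not_le.mpr hs2)
end

section
/- For a quasi-metric space (X,d) the following are equivalent: (1) (X,d) is standard; (2) for each directed subset {(x_i,r_i)}_{i∈D} of BX (viewed as a monotone net), if {(x_i,r_i)}_{i∈D} has a least upper bound in BX, then so do (i) the directed set {(x_i, t + r_i)}_{i∈D} for each t < ∞, and (ii) the directed set {(x_i, r_i − t)}_{i∈D} for t = inf_{i∈D} r_i. -/
open scoped ENNReal NNReal

universe u v w

namespace QuasiMetric

variable {X : Type u}

theorem myBallLE_refl (q : QuasiMetric X) (p : X × ℝ≥0) : q.ballLE p p := by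
  simp [ballLE, q.d_self]

theorem myBallLE_trans (q : QuasiMetric X) {p1 p2 p3 : X × ℝ≥0}
    (h12 : q.ballLE p1 p2) (h23 : q.ballLE p2 p3) : q.ballLE p1 p3 := by
  unfold ballLE at *
  calc (p3.2 : ℝ≥0∞) + q.d p1.1 p3.1
      ≤ (p3.2 : ℝ≥0∞) + (q.d p1.1 p2.1 + q.d p2.1 p3.1) :=
        add_le_add_right (q.d_triangle _ _ _) _
    _ = ((p3.2 : ℝ≥0∞) + q.d p2.1 p3.1) + q.d p1.1 p2.1 := by ring
    _ ≤ (p2.2 : ℝ≥0∞) + q.d p1.1 p2.1 := add_le_add_left h23 _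
    _ ≤ (p1.2 : ℝ≥0∞) := h12

theorem myBallLE_rad (q : QuasiMetric X) {p p' : X × ℝ≥0} (h : q.ballLE p p') :
    p'.2 ≤ p.2 := by
  have : (p'.2 : ℝ≥0∞) ≤ (p.2 : ℝ≥0∞) := le_trans le_self_add h
  exact_mod_cast this

theorem myCancel {K b : ℝ≥0∞} (hK : K ≠ ⊤) (h : K + b ≤ K) : b = 0 := by
  have h' : K + b ≤ K + 0 := by simpa using h
  exact le_antisymm ((ENNReal.add_le_add_iff_left hK).mp h') zero_le


theorem myiInf_sub {ι : Sort v} [Nonempty ι] (f : ι → ℝ≥0) {t0 : ℝ≥0}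
    (hlt : ∀ ε : ℝ≥0, 0 < ε → ∃ i, f i < t0 + ε) :
    (⨅ i, ((f i : ℝ≥0∞) - (t0 : ℝ≥0∞))) ≤ 0 := by
  refine ENNReal.le_of_forall_pos_le_add fun ε hε _ => ?_
  obtain ⟨p, hp⟩ := hlt ε hε
  refine iInf_le_of_le p ?_
  rw [zero_add, tsub_le_iff_right]
  exact_mod_cast hp.le.trans (le_of_eq (add_comm _ _))

end QuasiMetric

open QuasiMetric in
/-- `(X, d)` is standard iff for each directed set `S` of formal balls
having a least upper bound, (i) for each `t < ∞` the directed set `{(x, t + r) | (x,r) ∈ S}`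
has a least upper bound, and (ii) the directed set `{(x, r - t) | (x,r) ∈ S}` for
`t = inf` of the radii has a least upper bound. -/
theorem stmt2 {X : Type u} (q : QuasiMetric X) :
    q.Standard ↔
      ∀ S : Set (X × ℝ≥0), S.Nonempty → DirectedOn q.ballLE S →
        (∃ b, q.IsBallLUB S b) →
        ((∀ t : ℝ≥0, ∃ c, q.IsBallLUB ((fun p : X × ℝ≥0 => (p.1, t + p.2)) '' S) c) ∧
          (∃ c, q.IsBallLUB
            ((fun p : X × ℝ≥0 => (p.1, p.2 - ⨅ p' : ↥S, (p' : X × ℝ≥0).2)) '' S) c)) := by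
  constructor
  · -- Standard → condition
    intro hstd S hne hdir hlub
    haveI : Nonempty ↥S := hne.to_subtype
    obtain ⟨a, ha⟩ := hstd S hne hdir hlub
    set t0 : ℝ≥0 := ⨅ p' : ↥S, (p' : X × ℝ≥0).2 with ht0def
    have ht0le : ∀ p : ↥S, t0 ≤ (p : X × ℝ≥0).2 := by
      intro p; rw [ht0def]; exact ciInf_le (OrderBot.bddBelow _) p
    have ht0lt : ∀ ε : ℝ≥0, 0 < ε → ∃ p : ↥S, (p : X × ℝ≥0).2 < t0 + ε := by
      intro ε hε; rw [ht0def]; exact exists_lt_of_ciInf_lt (lt_add_of_pos_right _ hε)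
    have key : ∀ p : ↥S, q.d (p : X × ℝ≥0).1 a ≤ ((p : X × ℝ≥0).2 : ℝ≥0∞) - (t0 : ℝ≥0∞) := by
      intro p
      refine ENNReal.le_of_forall_pos_le_add fun ε hε _ => ?_
      have h0 : (⨅ i : ↥S, ⨆ j : ↥S, ⨆ _ : q.ballLE i.1 j.1, q.d (j : X × ℝ≥0).1 a) = 0 :=
        (ha a).symm.trans (q.d_self a)
      have hlt : (⨅ i : ↥S, ⨆ j : ↥S, ⨆ _ : q.ballLE i.1 j.1, q.d (j : X × ℝ≥0).1 a)
          < (ε : ℝ≥0∞) := by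
        rw [h0]; exact_mod_cast hε
      obtain ⟨i, hi⟩ := iInf_lt_iff.mp hlt
      obtain ⟨k, hkS, hpk, hik⟩ := hdir p.1 p.2 i.1 i.2
      have hka : q.d k.1 a < (ε : ℝ≥0∞) :=
        lt_of_le_of_lt (le_iSup₂ (f := fun (j : ↥S) (_ : q.ballLE i.1 j.1) =>
          q.d (j : X × ℝ≥0).1 a) ⟨k, hkS⟩ hik) hi
      calc q.d (p : X × ℝ≥0).1 a ≤ q.d (p : X × ℝ≥0).1 k.1 + q.d k.1 a := q.d_triangle _ _ _
        _ ≤ (((p : X × ℝ≥0).2 : ℝ≥0∞) - (k.2 : ℝ≥0∞)) + (ε : ℝ≥0∞) :=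
            add_le_add (ENNReal.le_sub_of_add_le_left ENNReal.coe_ne_top hpk) hka.le
        _ ≤ (((p : X × ℝ≥0).2 : ℝ≥0∞) - (t0 : ℝ≥0∞)) + (ε : ℝ≥0∞) := by
            refine add_le_add_left (tsub_le_tsub_left ?_ _) _
            exact_mod_cast ht0le ⟨k, hkS⟩
    have hL5 : (⨅ i : ↥S, (((i : X × ℝ≥0).2 : ℝ≥0∞) - (t0 : ℝ≥0∞))) ≤ 0 :=
      myiInf_sub _ ht0lt
    constructor
    · intro t
      refine ⟨(a, t + t0), ?_, ?_⟩
      · rintro p' ⟨p, hpS, rfl⟩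
        show ((t + t0 : ℝ≥0) : ℝ≥0∞) + q.d p.1 a ≤ ((t + p.2 : ℝ≥0) : ℝ≥0∞)
        have h1 : (t0 : ℝ≥0∞) + q.d p.1 a ≤ (p.2 : ℝ≥0∞) := by
          calc (t0 : ℝ≥0∞) + q.d p.1 a ≤ (t0 : ℝ≥0∞) + ((p.2 : ℝ≥0∞) - (t0 : ℝ≥0∞)) :=
            add_le_add_right (key ⟨p, hpS⟩) _
          _ = (p.2 : ℝ≥0∞) := add_tsub_cancel_of_le (by exact_mod_cast ht0le ⟨p, hpS⟩)
        push_cast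
        calc (t : ℝ≥0∞) + (t0 : ℝ≥0∞) + q.d p.1 a
            = (t : ℝ≥0∞) + ((t0 : ℝ≥0∞) + q.d p.1 a) := by ring
          _ ≤ (t : ℝ≥0∞) + (p.2 : ℝ≥0∞) := add_le_add_right h1 _
      · intro c hc
        show (c.2 : ℝ≥0∞) + q.d a c.1 ≤ ((t + t0 : ℝ≥0) : ℝ≥0∞)
        have step : ∀ i : ↥S,
            (c.2 : ℝ≥0∞) + (⨆ j : ↥S, ⨆ _ : q.ballLE i.1 j.1, q.d (j : X × ℝ≥0).1 c.1)
              ≤ (t : ℝ≥0∞) + ((i : X × ℝ≥0).2 : ℝ≥0∞) := by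
          intro i
          rw [ENNReal.add_iSup]
          refine iSup_le fun j => ?_
          by_cases hij : q.ballLE i.1 j.1
          · rw [iSup_pos hij]
            calc (c.2 : ℝ≥0∞) + q.d (j : X × ℝ≥0).1 c.1
                ≤ ((t + (j : X × ℝ≥0).2 : ℝ≥0) : ℝ≥0∞) := hc _ ⟨j.1, j.2, rfl⟩
              _ ≤ (t : ℝ≥0∞) + ((i : X × ℝ≥0).2 : ℝ≥0∞) := by
                  push_cast
                  exact add_le_add_right (by exact_mod_cast q.myBallLE_rad hij) _
          · simp only [iSup_neg hij, bot_eq_zero, add_zero]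
            have h2 : (c.2 : ℝ≥0∞) + q.d (i : X × ℝ≥0).1 c.1
                ≤ ((t + (i : X × ℝ≥0).2 : ℝ≥0) : ℝ≥0∞) := hc _ ⟨i.1, i.2, rfl⟩
            exact le_trans (le_trans le_self_add h2) (le_of_eq (ENNReal.coe_add _ _))
        calc (c.2 : ℝ≥0∞) + q.d a c.1
            = ⨅ i : ↥S, ((c.2 : ℝ≥0∞)
                + ⨆ j : ↥S, ⨆ _ : q.ballLE i.1 j.1, q.d (j : X × ℝ≥0).1 c.1) := by
              rw [ha c.1, ENNReal.add_iInf]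
          _ ≤ ⨅ i : ↥S, ((t : ℝ≥0∞) + ((i : X × ℝ≥0).2 : ℝ≥0∞)) := iInf_mono step
          _ = ((t + t0 : ℝ≥0) : ℝ≥0∞) := by
              rw [← ENNReal.add_iInf, ht0def]
              push_cast
              rfl
    · refine ⟨(a, 0), ?_, ?_⟩
      · rintro p' ⟨p, hpS, rfl⟩
        show ((0 : ℝ≥0) : ℝ≥0∞) + q.d p.1 a ≤ ((p.2 - t0 : ℝ≥0) : ℝ≥0∞)
        rw [ENNReal.coe_zero, zero_add, ENNReal.coe_sub]
        exact key ⟨p, hpS⟩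
      · intro c hc
        show (c.2 : ℝ≥0∞) + q.d a c.1 ≤ ((0 : ℝ≥0) : ℝ≥0∞)
        rw [ENNReal.coe_zero]
        have step : ∀ i : ↥S,
            (c.2 : ℝ≥0∞) + (⨆ j : ↥S, ⨆ _ : q.ballLE i.1 j.1, q.d (j : X × ℝ≥0).1 c.1)
              ≤ ((i : X × ℝ≥0).2 : ℝ≥0∞) - (t0 : ℝ≥0∞) := by
          intro i
          rw [ENNReal.add_iSup]
          refine iSup_le fun j => ?_
          by_cases hij : q.ballLE i.1 j.1
          · rw [iSup_pos hij]
            have h2 : (c.2 : ℝ≥0∞) + q.d (j : X × ℝ≥0).1 c.1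
                ≤ (((j : X × ℝ≥0).2 - t0 : ℝ≥0) : ℝ≥0∞) := hc _ ⟨j.1, j.2, rfl⟩
            rw [ENNReal.coe_sub] at h2
            exact h2.trans (tsub_le_tsub_right (by exact_mod_cast q.myBallLE_rad hij) _)
          · simp only [iSup_neg hij, bot_eq_zero, add_zero]
            have h2 : (c.2 : ℝ≥0∞) + q.d (i : X × ℝ≥0).1 c.1
                ≤ (((i : X × ℝ≥0).2 - t0 : ℝ≥0) : ℝ≥0∞) := hc _ ⟨i.1, i.2, rfl⟩
            rw [ENNReal.coe_sub] at h2
            exact le_trans le_self_add h2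
        calc (c.2 : ℝ≥0∞) + q.d a c.1
            = ⨅ i : ↥S, ((c.2 : ℝ≥0∞)
                + ⨆ j : ↥S, ⨆ _ : q.ballLE i.1 j.1, q.d (j : X × ℝ≥0).1 c.1) := by
              rw [ha c.1, ENNReal.add_iInf]
          _ ≤ ⨅ i : ↥S, (((i : X × ℝ≥0).2 : ℝ≥0∞) - (t0 : ℝ≥0∞)) := iInf_mono step
          _ ≤ 0 := hL5
  · -- condition → Standard
    intro H S hne hdir hlub
    haveI : Nonempty ↥S := hne.to_subtype
    obtain ⟨a0, ha0⟩ := (H S hne hdir hlub).2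
    set t0 : ℝ≥0 := ⨅ p' : ↥S, (p' : X × ℝ≥0).2 with ht0def
    have ht0le : ∀ p : ↥S, t0 ≤ (p : X × ℝ≥0).2 := by
      intro p; rw [ht0def]; exact ciInf_le (OrderBot.bddBelow _) p
    have ht0lt : ∀ ε : ℝ≥0, 0 < ε → ∃ p : ↥S, (p : X × ℝ≥0).2 < t0 + ε := by
      intro ε hε; rw [ht0def]; exact exists_lt_of_ciInf_lt (lt_add_of_pos_right _ hε)
    have hL5 : (⨅ i : ↥S, (((i : X × ℝ≥0).2 : ℝ≥0∞) - (t0 : ℝ≥0∞))) ≤ 0 :=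
      myiInf_sub _ ht0lt
    have key2 : ∀ p : ↥S,
        q.d (p : X × ℝ≥0).1 a0.1 ≤ ((p : X × ℝ≥0).2 : ℝ≥0∞) - (t0 : ℝ≥0∞) := by
      intro p
      have h : (a0.2 : ℝ≥0∞) + q.d (p : X × ℝ≥0).1 a0.1
          ≤ (((p : X × ℝ≥0).2 - t0 : ℝ≥0) : ℝ≥0∞) := ha0.1 _ ⟨p.1, p.2, rfl⟩
      rw [ENNReal.coe_sub] at h
      exact le_trans le_add_self h
    have hu : (a0.2 : ℝ≥0∞) ≤ 0 := by
      refine ENNReal.le_of_forall_pos_le_add fun ε hε _ => ?_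
      obtain ⟨p, hp⟩ := ht0lt ε hε
      have h : (a0.2 : ℝ≥0∞) + q.d (p : X × ℝ≥0).1 a0.1
          ≤ (((p : X × ℝ≥0).2 - t0 : ℝ≥0) : ℝ≥0∞) := ha0.1 _ ⟨p.1, p.2, rfl⟩
      have h1 : (a0.2 : ℝ≥0∞) ≤ (((p : X × ℝ≥0).2 - t0 : ℝ≥0) : ℝ≥0∞) :=
        le_trans le_self_add h
      rw [zero_add]
      refine h1.trans ?_
      have h2 : (p : X × ℝ≥0).2 - t0 ≤ ε :=
        tsub_le_iff_right.mpr (by rw [add_comm]; exact hp.le)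
      exact_mod_cast h2
    refine ⟨a0.1, fun y => ?_⟩
    show q.d a0.1 y = ⨅ i : ↥S, ⨆ j : ↥S, ⨆ _ : q.ballLE i.1 j.1, q.d (j : X × ℝ≥0).1 y
    refine le_antisymm ?_ ?_
    · -- d a y ≤ iInf
      have main : ∀ (i0 : ↥S) (t : ℝ≥0),
          (∀ p ∈ S, q.ballLE i0.1 p → q.d p.1 y ≤ (t : ℝ≥0∞)) →
          q.d a0.1 y ≤ (t : ℝ≥0∞) := by
        intro i0 t hty
        set T : Set (X × ℝ≥0) := {p ∈ S | q.ballLE i0.1 p} with hTdef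
        have hi0T : i0.1 ∈ T := ⟨i0.2, q.myBallLE_refl i0.1⟩
        have hTne : T.Nonempty := ⟨i0.1, hi0T⟩
        have hTsub : T ⊆ S := fun p hp => hp.1
        have hTdir : DirectedOn q.ballLE T := by
          rintro p ⟨hpS, hpi⟩ r ⟨hrS, hri⟩
          obtain ⟨k, hkS, hpk, hrk⟩ := hdir p hpS r hrS
          exact ⟨k, ⟨hkS, q.myBallLE_trans hpi hpk⟩, hpk, hrk⟩
        have hTcof : ∀ p ∈ S, ∃ k ∈ T, q.ballLE p k := by
          intro p hpS
          obtain ⟨k, hkS, hpk, hik⟩ := hdir p hpS i0.1 i0.2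
          exact ⟨k, ⟨hkS, hik⟩, hpk⟩
        have hTlub : ∃ b, q.IsBallLUB T b := by
          obtain ⟨b, hb⟩ := hlub
          refine ⟨b, fun p hp => hb.1 p (hTsub hp), fun c hc => hb.2 c fun p hpS => ?_⟩
          obtain ⟨k, hkT, hpk⟩ := hTcof p hpS
          exact q.myBallLE_trans hpk (hc k hkT)
        obtain ⟨cs, hcs⟩ := (H T hTne hTdir hTlub).1 t
        have hF1 : (cs.2 : ℝ≥0∞) ≤ (t : ℝ≥0∞) + (t0 : ℝ≥0∞) := by
          refine ENNReal.le_of_forall_pos_le_add fun ε' hε' _ => ?_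
          obtain ⟨p, hp⟩ := ht0lt ε' hε'
          obtain ⟨k, hkT, hpk⟩ := hTcof p.1 p.2
          have h : (cs.2 : ℝ≥0∞) + q.d k.1 cs.1 ≤ ((t + k.2 : ℝ≥0) : ℝ≥0∞) :=
            hcs.1 _ ⟨k, hkT, rfl⟩
          have h1 : (cs.2 : ℝ≥0∞) ≤ ((t + k.2 : ℝ≥0) : ℝ≥0∞) := le_trans le_self_add h
          have h2 : k.2 ≤ (p : X × ℝ≥0).2 := q.myBallLE_rad hpk
          have h3 : t + k.2 ≤ t + t0 + ε' := by
            calc t + k.2 ≤ t + (p : X × ℝ≥0).2 := add_le_add_right h2 _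
              _ ≤ t + (t0 + ε') := add_le_add_right hp.le _
              _ = t + t0 + ε' := by ring
          calc (cs.2 : ℝ≥0∞) ≤ ((t + k.2 : ℝ≥0) : ℝ≥0∞) := h1
            _ ≤ ((t + t0 + ε' : ℝ≥0) : ℝ≥0∞) := by exact_mod_cast h3
            _ = (t : ℝ≥0∞) + (t0 : ℝ≥0∞) + (ε' : ℝ≥0∞) := by push_cast; ring
        have hF2 : ∀ p' ∈ (fun p : X × ℝ≥0 => (p.1, t + p.2)) '' T,
            q.ballLE p' (a0.1, t + t0) := by
          rintro p' ⟨p, hpT, rfl⟩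
          show ((t + t0 : ℝ≥0) : ℝ≥0∞) + q.d p.1 a0.1 ≤ ((t + p.2 : ℝ≥0) : ℝ≥0∞)
          have hk := key2 ⟨p, hTsub hpT⟩
          have ht0p : (t0 : ℝ≥0∞) ≤ (p.2 : ℝ≥0∞) := by exact_mod_cast ht0le ⟨p, hTsub hpT⟩
          push_cast
          calc (t : ℝ≥0∞) + (t0 : ℝ≥0∞) + q.d p.1 a0.1
              = (t : ℝ≥0∞) + ((t0 : ℝ≥0∞) + q.d p.1 a0.1) := by ring
            _ ≤ (t : ℝ≥0∞) + ((t0 : ℝ≥0∞) + ((p.2 : ℝ≥0∞) - (t0 : ℝ≥0∞))) :=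
                add_le_add_right (add_le_add_right hk _) _
            _ = (t : ℝ≥0∞) + (p.2 : ℝ≥0∞) := by rw [add_tsub_cancel_of_le ht0p]
        have hF2' := hcs.2 _ hF2
        have hseq : (cs.2 : ℝ≥0∞) = ((t + t0 : ℝ≥0) : ℝ≥0∞) := by
          refine le_antisymm ?_ (le_trans le_self_add hF2')
          rw [ENNReal.coe_add]; exact hF1
        have hTc : ∀ p ∈ T, (t0 : ℝ≥0∞) + q.d p.1 cs.1 ≤ (p.2 : ℝ≥0∞) := by
          intro p hpT
          have h : (cs.2 : ℝ≥0∞) + q.d p.1 cs.1 ≤ ((t + p.2 : ℝ≥0) : ℝ≥0∞) :=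
            hcs.1 _ ⟨p, hpT, rfl⟩
          rw [hseq] at h
          have h' : (t : ℝ≥0∞) + ((t0 : ℝ≥0∞) + q.d p.1 cs.1)
              ≤ (t : ℝ≥0∞) + (p.2 : ℝ≥0∞) := by
            calc (t : ℝ≥0∞) + ((t0 : ℝ≥0∞) + q.d p.1 cs.1)
                = ((t + t0 : ℝ≥0) : ℝ≥0∞) + q.d p.1 cs.1 := by push_cast; ring
              _ ≤ ((t + p.2 : ℝ≥0) : ℝ≥0∞) := h
              _ = (t : ℝ≥0∞) + (p.2 : ℝ≥0∞) := by push_cast; rfl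
          exact (ENNReal.add_le_add_iff_left ENNReal.coe_ne_top).mp h'
        have hF3ub : ∀ p' ∈ (fun p : X × ℝ≥0 => (p.1, p.2 - t0)) '' S,
            q.ballLE p' (cs.1, 0) := by
          rintro p' ⟨p, hpS, rfl⟩
          show ((0 : ℝ≥0) : ℝ≥0∞) + q.d p.1 cs.1 ≤ ((p.2 - t0 : ℝ≥0) : ℝ≥0∞)
          rw [ENNReal.coe_zero, zero_add, ENNReal.coe_sub]
          obtain ⟨k, hkT, hpk⟩ := hTcof p hpS
          refine ENNReal.le_sub_of_add_le_left ENNReal.coe_ne_top ?_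
          calc (t0 : ℝ≥0∞) + q.d p.1 cs.1
              ≤ (t0 : ℝ≥0∞) + (q.d p.1 k.1 + q.d k.1 cs.1) :=
                add_le_add_right (q.d_triangle _ _ _) _
            _ = q.d p.1 k.1 + ((t0 : ℝ≥0∞) + q.d k.1 cs.1) := by ring
            _ ≤ ((p.2 : ℝ≥0∞) - (k.2 : ℝ≥0∞)) + (k.2 : ℝ≥0∞) :=
                add_le_add (ENNReal.le_sub_of_add_le_left ENNReal.coe_ne_top hpk) (hTc k hkT)
            _ ≤ (p.2 : ℝ≥0∞) :=
                le_of_eq (tsub_add_cancel_of_le (by exact_mod_cast q.myBallLE_rad hpk))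
        have hac : q.d a0.1 cs.1 = 0 := by
          have h : ((0 : ℝ≥0) : ℝ≥0∞) + q.d a0.1 cs.1 ≤ (a0.2 : ℝ≥0∞) := ha0.2 _ hF3ub
          have h' : q.d a0.1 cs.1 ≤ (a0.2 : ℝ≥0∞) := by simpa using h
          exact le_antisymm (h'.trans hu) zero_le
        have hF4 : ∀ p' ∈ (fun p : X × ℝ≥0 => (p.1, t + p.2)) '' T,
            q.ballLE p' (y, t0) := by
          rintro p' ⟨p, hpT, rfl⟩
          show (t0 : ℝ≥0∞) + q.d p.1 y ≤ ((t + p.2 : ℝ≥0) : ℝ≥0∞)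
          have h1 : q.d p.1 y ≤ (t : ℝ≥0∞) := hty p (hTsub hpT) hpT.2
          have h2 : (t0 : ℝ≥0∞) ≤ (p.2 : ℝ≥0∞) := by exact_mod_cast ht0le ⟨p, hTsub hpT⟩
          push_cast
          calc (t0 : ℝ≥0∞) + q.d p.1 y ≤ (p.2 : ℝ≥0∞) + (t : ℝ≥0∞) := add_le_add h2 h1
            _ = (t : ℝ≥0∞) + (p.2 : ℝ≥0∞) := add_comm _ _
        have hF4' := hcs.2 _ hF4
        have hcy : q.d cs.1 y ≤ (t : ℝ≥0∞) := by
          have h : (t0 : ℝ≥0∞) + q.d cs.1 y ≤ (t0 : ℝ≥0∞) + (t : ℝ≥0∞) := by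
            calc (t0 : ℝ≥0∞) + q.d cs.1 y ≤ (cs.2 : ℝ≥0∞) := hF4'
              _ = ((t + t0 : ℝ≥0) : ℝ≥0∞) := hseq
              _ = (t0 : ℝ≥0∞) + (t : ℝ≥0∞) := by push_cast; ring
          exact (ENNReal.add_le_add_iff_left ENNReal.coe_ne_top).mp h
        calc q.d a0.1 y ≤ q.d a0.1 cs.1 + q.d cs.1 y := q.d_triangle _ _ _
          _ = q.d cs.1 y := by rw [hac, zero_add]
          _ ≤ (t : ℝ≥0∞) := hcy
      refine ENNReal.le_of_forall_pos_le_add fun ε hε hV => ?_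
      have hV' : (⨅ i : ↥S, ⨆ j : ↥S, ⨆ _ : q.ballLE i.1 j.1, q.d (j : X × ℝ≥0).1 y) ≠ ⊤ :=
        hV.ne
      have hVlt : (⨅ i : ↥S, ⨆ j : ↥S, ⨆ _ : q.ballLE i.1 j.1, q.d (j : X × ℝ≥0).1 y)
          < (⨅ i : ↥S, ⨆ j : ↥S, ⨆ _ : q.ballLE i.1 j.1, q.d (j : X × ℝ≥0).1 y)
            + (ε : ℝ≥0∞) :=
        ENNReal.lt_add_right hV' (by exact_mod_cast hε.ne')
      obtain ⟨i0, hi0⟩ := iInf_lt_iff.mp hVlt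
      have htop : (⨅ i : ↥S, ⨆ j : ↥S, ⨆ _ : q.ballLE i.1 j.1, q.d (j : X × ℝ≥0).1 y)
          + (ε : ℝ≥0∞) ≠ ⊤ :=
        ENNReal.add_ne_top.mpr ⟨hV', ENNReal.coe_ne_top⟩
      have hcoe : ((((⨅ i : ↥S, ⨆ j : ↥S, ⨆ _ : q.ballLE i.1 j.1, q.d (j : X × ℝ≥0).1 y)
          + (ε : ℝ≥0∞)).toNNReal : ℝ≥0) : ℝ≥0∞)
          = (⨅ i : ↥S, ⨆ j : ↥S, ⨆ _ : q.ballLE i.1 j.1, q.d (j : X × ℝ≥0).1 y)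
            + (ε : ℝ≥0∞) :=
        ENNReal.coe_toNNReal htop
      refine le_of_le_of_eq (main i0 _ ?_) hcoe
      intro p hpS hple
      rw [hcoe]
      refine le_trans ?_ hi0.le
      exact le_iSup₂ (f := fun (j : ↥S) (_ : q.ballLE i0.1 j.1) =>
        q.d (j : X × ℝ≥0).1 y) ⟨p, hpS⟩ hple
    · -- iInf ≤ d a y
      have step : ∀ i : ↥S,
          (⨆ j : ↥S, ⨆ _ : q.ballLE i.1 j.1, q.d (j : X × ℝ≥0).1 y)
            ≤ (((i : X × ℝ≥0).2 : ℝ≥0∞) - (t0 : ℝ≥0∞)) + q.d a0.1 y := by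
        intro i
        refine iSup₂_le fun j hij => ?_
        calc q.d (j : X × ℝ≥0).1 y ≤ q.d (j : X × ℝ≥0).1 a0.1 + q.d a0.1 y :=
            q.d_triangle _ _ _
          _ ≤ (((j : X × ℝ≥0).2 : ℝ≥0∞) - (t0 : ℝ≥0∞)) + q.d a0.1 y :=
              add_le_add_left (key2 j) _
          _ ≤ (((i : X × ℝ≥0).2 : ℝ≥0∞) - (t0 : ℝ≥0∞)) + q.d a0.1 y :=
              add_le_add_left
                (tsub_le_tsub_right (by exact_mod_cast q.myBallLE_rad hij) _) _
      calc (⨅ i : ↥S, ⨆ j : ↥S, ⨆ _ : q.ballLE i.1 j.1, q.d (j : X × ℝ≥0).1 y)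
          ≤ ⨅ i : ↥S, ((((i : X × ℝ≥0).2 : ℝ≥0∞) - (t0 : ℝ≥0∞)) + q.d a0.1 y) :=
            iInf_mono step
        _ = (⨅ i : ↥S, (((i : X × ℝ≥0).2 : ℝ≥0∞) - (t0 : ℝ≥0∞))) + q.d a0.1 y :=
            ENNReal.iInf_add.symm
        _ ≤ 0 + q.d a0.1 y := add_le_add_left hL5 _
        _ = q.d a0.1 y := zero_add _
end

section
/- If a quasi-metric space (X,d) is Yoneda complete, then it is standard. -/
open scoped ENNReal NNReal

universe u v w

open QuasiMetric in
/-- every Yoneda complete quasi-metric space is standard. -/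
theorem stmt3 {X : Type u} (q : QuasiMetric X) (h : q.YonedaComplete) : q.Standard := by
  intro S hne hdir _
  set le : ↥S → ↥S → Prop := fun p p' => q.ballLE p.1 p'.1 with hle
  have hDP : DirectedPre le := by
    refine ⟨fun i => ?_, fun i j k hij hjk => ?_, fun i j => ?_⟩
    · simp [hle, ballLE, q.d_self]
    · unfold le at *
      unfold ballLE at *
      calc (k.1.2 : ℝ≥0∞) + q.d i.1.1 k.1.1
          ≤ (k.1.2 : ℝ≥0∞) + (q.d i.1.1 j.1.1 + q.d j.1.1 k.1.1) :=
            add_le_add_right (q.d_triangle _ _ _) _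
        _ = ((k.1.2 : ℝ≥0∞) + q.d j.1.1 k.1.1) + q.d i.1.1 j.1.1 := by ring
        _ ≤ (j.1.2 : ℝ≥0∞) + q.d i.1.1 j.1.1 := add_le_add hjk le_rfl
        _ ≤ (i.1.2 : ℝ≥0∞) := hij
    · obtain ⟨k, hkS, hik, hjk⟩ := hdir i.1 i.2 j.1 j.2
      exact ⟨⟨k, hkS⟩, hik, hjk⟩
  have hNE : Nonempty ↥S := hne.to_subtype
  -- radius infimum
  set t : ℝ≥0∞ := ⨅ i : ↥S, (i.1.2 : ℝ≥0∞) with ht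
  have hFC : q.ForwardCauchy le (fun p : ↥S => p.1.1) := by
    unfold ForwardCauchy
    refine le_antisymm ?_ zero_le
    refine ENNReal.le_of_forall_pos_le_add fun ε hε _ => ?_
    rw [zero_add]
    -- pick i with r_i < t + ε
    have htlt : t < t + ε := by
      refine ENNReal.lt_add_right ?_ (by exact_mod_cast hε.ne')
      obtain ⟨i⟩ := hNE
      exact ne_top_of_le_ne_top (ENNReal.coe_ne_top) (iInf_le _ i)
    obtain ⟨i, hi⟩ := iInf_lt_iff.mp htlt
    refine le_trans (iInf_le _ i) ?_
    refine iSup_le fun j => iSup_le fun hij => iSup_le fun k => iSup_le fun hjk => ?_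
    unfold le at hij hjk
    unfold ballLE at hij hjk
    have h1 : q.d j.1.1 k.1.1 ≤ (j.1.2 : ℝ≥0∞) - (k.1.2 : ℝ≥0∞) :=
      ENNReal.le_sub_of_add_le_left ENNReal.coe_ne_top hjk
    have h2 : (j.1.2 : ℝ≥0∞) ≤ (i.1.2 : ℝ≥0∞) :=
      le_trans (le_add_right le_rfl) hij
    have h3 : t ≤ (k.1.2 : ℝ≥0∞) := iInf_le _ k
    calc q.d j.1.1 k.1.1 ≤ (j.1.2 : ℝ≥0∞) - (k.1.2 : ℝ≥0∞) := h1
      _ ≤ (i.1.2 : ℝ≥0∞) - t := tsub_le_tsub h2 h3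
      _ ≤ (ε : ℝ≥0∞) := tsub_le_iff_right.mpr (by rw [add_comm]; exact hi.le)
  exact h ↥S le hDP hNE _ hFC
end

section
/- A quasi-metric space (X,d) is Yoneda complete if and only if the partially ordered set BX of formal balls is a dcpo, i.e., every directed subset of BX has a least upper bound. -/
open scoped ENNReal NNReal

universe u v w

namespace QuasiMetric

private lemma le_of_forall_coe_gt {s v : ℝ≥0∞} (h : ∀ r : ℝ≥0, s < r → v ≤ r) : v ≤ s := by
  rcases eq_or_ne s ⊤ with hs | hs
  · simp [hs]
  by_contra hv
  push_neg at hv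
  obtain ⟨r, hr1, hr2⟩ := ENNReal.lt_iff_exists_nnreal_btwn.1 hv
  exact absurd (h r hr1) (not_le.2 hr2)

end QuasiMetric

open QuasiMetric in
/-- `(X, d)` is Yoneda complete iff the poset `BX` of formal balls is a
dcpo, i.e., every directed subset of `BX` has a least upper bound. -/
theorem stmt4 {X : Type u} (q : QuasiMetric X) : q.YonedaComplete ↔ q.BallDcpo := by
  constructor
  · -- Yoneda complete ⇒ dcpo
    intro hy S hSne hSdir
    obtain ⟨p₀, hp₀⟩ := hSne
    have hrefl : ∀ p : ↥S, q.ballLE p.1 p.1 := fun p => by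
      simp [ballLE, q.d_self]
    have htrans : ∀ p p' p'' : X × ℝ≥0, q.ballLE p p' → q.ballLE p' p'' → q.ballLE p p'' := by
      intro p p' p'' h1 h2
      calc (p''.2 : ℝ≥0∞) + q.d p.1 p''.1
          ≤ (p''.2 : ℝ≥0∞) + (q.d p.1 p'.1 + q.d p'.1 p''.1) := by
            gcongr; exact q.d_triangle _ _ _
        _ = q.d p.1 p'.1 + ((p''.2 : ℝ≥0∞) + q.d p'.1 p''.1) := by ring
        _ ≤ q.d p.1 p'.1 + (p'.2 : ℝ≥0∞) := by gcongr; exact h2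
        _ = (p'.2 : ℝ≥0∞) + q.d p.1 p'.1 := add_comm _ _
        _ ≤ (p.2 : ℝ≥0∞) := h1
    have hdir : ∀ p p' : ↥S, ∃ p'' : ↥S, q.ballLE p.1 p''.1 ∧ q.ballLE p'.1 p''.1 := by
      intro p p'
      obtain ⟨z, hz, h1, h2⟩ := hSdir p.1 p.2 p'.1 p'.2
      exact ⟨⟨z, hz⟩, h1, h2⟩
    have hradle : ∀ p p' : X × ℝ≥0, q.ballLE p p' → (p'.2 : ℝ≥0∞) ≤ (p.2 : ℝ≥0∞) :=
      fun p p' h => le_trans (le_add_right le_rfl) h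
    set ρ : ℝ≥0∞ := ⨅ p : ↥S, (p.1.2 : ℝ≥0∞) with hρ
    have hρtop : ρ ≠ ⊤ :=
      ((iInf_le (fun p : ↥S => (p.1.2 : ℝ≥0∞)) ⟨p₀, hp₀⟩).trans_lt ENNReal.coe_lt_top).ne
    have hρle : ∀ p : ↥S, ρ ≤ (p.1.2 : ℝ≥0∞) := fun p => iInf_le _ p
    -- the net of centers is forward Cauchy
    have hFC : q.ForwardCauchy (fun p p' : ↥S => q.ballLE p.1 p'.1) (fun p : ↥S => p.1.1) := by
      refine le_antisymm ?_ zero_le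
      refine ENNReal.le_of_forall_pos_le_add fun ε hε _ => ?_
      rw [zero_add]
      have hlt : ρ < ρ + (ε : ℝ≥0∞) :=
        ENNReal.lt_add_right hρtop (by exact_mod_cast hε.ne')
      obtain ⟨p, hp⟩ := iInf_lt_iff.1 (hρ ▸ hlt)
      refine (iInf_le _ p).trans ?_
      refine iSup₂_le fun j hj => iSup₂_le fun k hk => ?_
      have h1 : (k.1.2 : ℝ≥0∞) + q.d j.1.1 k.1.1 ≤ (j.1.2 : ℝ≥0∞) := hk
      have h2 : (j.1.2 : ℝ≥0∞) ≤ (p.1.2 : ℝ≥0∞) := hradle _ _ hj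
      have : ρ + q.d j.1.1 k.1.1 ≤ ρ + (ε : ℝ≥0∞) :=
        le_trans (add_le_add (hρle k) le_rfl) (le_trans h1 (h2.trans hp.le))
      exact (ENNReal.add_le_add_iff_left hρtop).1 this
    obtain ⟨a, ha⟩ := hy ↥S (fun p p' => q.ballLE p.1 p'.1)
      ⟨hrefl, fun i j k => htrans i.1 j.1 k.1, hdir⟩ ⟨⟨p₀, hp₀⟩⟩ (fun p => p.1.1) hFC
    have hρcoe : ((ρ.toNNReal : ℝ≥0) : ℝ≥0∞) = ρ := ENNReal.coe_toNNReal hρtop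
    refine ⟨(a, ρ.toNNReal), ?_, ?_⟩
    · -- upper bound
      intro p hp
      show (ρ.toNNReal : ℝ≥0∞) + q.d p.1 a ≤ (p.2 : ℝ≥0∞)
      rw [hρcoe]
      refine ENNReal.le_of_forall_pos_le_add fun δ hδ _ => ?_
      have haa : (⨅ i : ↥S, ⨆ j : ↥S, ⨆ (_ : q.ballLE i.1 j.1), q.d j.1.1 a) = 0 := by
        have := ha a
        rw [q.d_self] at this
        exact this.symm
      have h0 : (⨅ i : ↥S, ⨆ j : ↥S, ⨆ (_ : q.ballLE i.1 j.1), q.d j.1.1 a) < (δ : ℝ≥0∞) := by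
        rw [haa]; exact_mod_cast hδ
      obtain ⟨p₁, hp₁⟩ := iInf_lt_iff.1 h0
      obtain ⟨z, hz1, hz2⟩ := hdir ⟨p, hp⟩ p₁
      have hza : q.d z.1.1 a ≤ (δ : ℝ≥0∞) := le_trans (le_iSup₂ (f := fun (j : ↥S) (_ : q.ballLE p₁.1 j.1) => q.d j.1.1 a) z hz2) hp₁.le
      calc ρ + q.d p.1 a
          ≤ ρ + (q.d p.1 z.1.1 + q.d z.1.1 a) := by gcongr; exact q.d_triangle _ _ _
        _ = (ρ + q.d p.1 z.1.1) + q.d z.1.1 a := by ring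
        _ ≤ ((z.1.2 : ℝ≥0∞) + q.d p.1 z.1.1) + (δ : ℝ≥0∞) :=
            add_le_add (add_le_add (hρle z) le_rfl) hza
        _ ≤ (p.2 : ℝ≥0∞) + (δ : ℝ≥0∞) := by gcongr; exact hz1
    · -- least
      intro c hc
      show (c.2 : ℝ≥0∞) + q.d a c.1 ≤ (ρ.toNNReal : ℝ≥0∞)
      rw [hρcoe, hρ]
      refine le_iInf fun p => ?_
      have hσp : (c.2 : ℝ≥0∞) ≤ (p.1.2 : ℝ≥0∞) := le_trans (le_add_right le_rfl) (hc p.1 p.2)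
      have hday : q.d a c.1 ≤ (p.1.2 : ℝ≥0∞) - (c.2 : ℝ≥0∞) := by
        rw [ha c.1]
        refine (iInf_le _ p).trans ?_
        refine iSup₂_le fun j hj => ?_
        refine ENNReal.le_sub_of_add_le_left ENNReal.coe_ne_top ?_
        exact le_trans (hc j.1 j.2) (hradle _ _ hj)
      calc (c.2 : ℝ≥0∞) + q.d a c.1 ≤ (c.2 : ℝ≥0∞) + ((p.1.2 : ℝ≥0∞) - (c.2 : ℝ≥0∞)) := by gcongr
        _ = (p.1.2 : ℝ≥0∞) := add_tsub_cancel_of_le hσp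
  · -- dcpo ⇒ Yoneda complete
    intro hd D le hle hne x hcauchy
    obtain ⟨hrefl, htrans, hdir⟩ := hle
    obtain ⟨i₁⟩ := hne
    set s : D → ℝ≥0∞ :=
      fun i => ⨆ j, ⨆ (_ : le i j), ⨆ k, ⨆ (_ : le j k), q.d (x j) (x k) with hs
    have hs_bound : ∀ i j k, le i j → le j k → q.d (x j) (x k) ≤ s i := by
      intro i j k hij hjk
      rw [hs]
      exact le_iSup_of_le j (le_iSup_of_le hij (le_iSup_of_le k (le_iSup_of_le hjk le_rfl)))
    have hs_anti : ∀ i i', le i i' → s i' ≤ s i := by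
      intro i i' h
      rw [hs]
      refine iSup₂_le fun j hj => iSup₂_le fun k hk => ?_
      exact hs_bound i j k (htrans _ _ _ h hj) hk
    have hs_small : ∀ ε : ℝ≥0∞, 0 < ε → ∃ m, s m < ε := by
      intro ε hε
      rw [← hcauchy] at hε
      exact iInf_lt_iff.1 hε
    set TS : (D → Prop) → Set (X × ℝ≥0) :=
      fun P => {p | ∃ j, P j ∧ s j < (p.2 : ℝ≥0∞) ∧ p.1 = x j} with hTS
    have hTSne : ∀ P : D → Prop, (∀ j l, P j → le j l → P l) → (∃ j, P j) →
        (TS P).Nonempty := by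
      rintro P hPup ⟨j₀, hj₀⟩
      obtain ⟨m, hm⟩ := hs_small 1 one_pos
      obtain ⟨l, hl1, hl2⟩ := hdir j₀ m
      exact ⟨(x l, 1), l, hPup _ _ hj₀ hl1,
        lt_of_le_of_lt (hs_anti m l hl2) (by simpa using hm), rfl⟩
    have hTSdir : ∀ P : D → Prop, (∀ j l, P j → le j l → P l) →
        DirectedOn q.ballLE (TS P) := by
      intro P hPup p hp p' hp'
      obtain ⟨j, hPj, hsj, hxj⟩ := hp
      obtain ⟨k, hPk, hsk, hxk⟩ := hp'
      set ε : ℝ≥0∞ := min ((p.2 : ℝ≥0∞) - s j) ((p'.2 : ℝ≥0∞) - s k) with hε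
      have hε1 : ε ≤ (p.2 : ℝ≥0∞) - s j := min_le_left _ _
      have hε2 : ε ≤ (p'.2 : ℝ≥0∞) - s k := min_le_right _ _
      have hεpos : 0 < ε := lt_min (tsub_pos_of_lt hsj) (tsub_pos_of_lt hsk)
      have hεtop : ε ≠ ⊤ :=
        ((hε1.trans tsub_le_self).trans_lt ENNReal.coe_lt_top).ne
      obtain ⟨m, hm⟩ := hs_small ε hεpos
      obtain ⟨l₁, hl₁j, hl₁k⟩ := hdir j k
      obtain ⟨l, hll₁, hlm⟩ := hdir l₁ m
      have hjl : le j l := htrans _ _ _ hl₁j hll₁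
      have hkl : le k l := htrans _ _ _ hl₁k hll₁
      refine ⟨(x l, ε.toNNReal), ⟨l, hPup j l hPj hjl, ?_, rfl⟩, ?_, ?_⟩
      · rw [ENNReal.coe_toNNReal hεtop]
        exact (hs_anti m l hlm).trans_lt hm
      · show ((ε.toNNReal : ℝ≥0) : ℝ≥0∞) + q.d p.1 (x l) ≤ (p.2 : ℝ≥0∞)
        rw [ENNReal.coe_toNNReal hεtop, hxj]
        calc ε + q.d (x j) (x l) ≤ ((p.2 : ℝ≥0∞) - s j) + s j :=
              add_le_add hε1 (hs_bound j j l (hrefl j) hjl)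
          _ = (p.2 : ℝ≥0∞) := tsub_add_cancel_of_le hsj.le
      · show ((ε.toNNReal : ℝ≥0) : ℝ≥0∞) + q.d p'.1 (x l) ≤ (p'.2 : ℝ≥0∞)
        rw [ENNReal.coe_toNNReal hεtop, hxk]
        calc ε + q.d (x k) (x l) ≤ ((p'.2 : ℝ≥0∞) - s k) + s k :=
              add_le_add hε2 (hs_bound k k l (hrefl k) hkl)
          _ = (p'.2 : ℝ≥0∞) := tsub_add_cancel_of_le hsk.le
    have hTSradii : ∀ P : D → Prop, (∀ j l, P j → le j l → P l) → (∃ j, P j) →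
        ∀ ε : ℝ≥0∞, 0 < ε → ∃ p ∈ TS P, (p.2 : ℝ≥0∞) ≤ ε := by
      rintro P hPup ⟨j₀, hj₀⟩ ε hε
      have hpos : 0 < min ε 1 := lt_min hε one_pos
      obtain ⟨m, hm⟩ := hs_small _ hpos
      obtain ⟨l, hl1, hl2⟩ := hdir j₀ m
      have htop : min ε 1 ≠ ⊤ := ((min_le_right ε 1).trans_lt ENNReal.one_lt_top).ne
      refine ⟨(x l, (min ε 1).toNNReal), ⟨l, hPup _ _ hj₀ hl1, ?_, rfl⟩, ?_⟩
      · rw [ENNReal.coe_toNNReal htop]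
        exact (hs_anti m l hl2).trans_lt hm
      · rw [ENNReal.coe_toNNReal htop]
        exact min_le_left _ _
    have hTSub : ∀ (P : D → Prop) (c : X × ℝ≥0), (∀ p ∈ TS P, q.ballLE p c) →
        ∀ j, P j → (c.2 : ℝ≥0∞) + q.d (x j) c.1 ≤ s j := by
      intro P c hub j hPj
      rcases eq_or_ne (s j) ⊤ with h | h
      · rw [h]; exact le_top
      refine le_of_forall_coe_gt fun r hr => ?_
      exact hub (x j, r) ⟨j, hPj, hr, rfl⟩
    -- the lub of all formal balls around the net
    obtain ⟨b, hbub, hbleast⟩ := hd (TS fun _ => True)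
      (hTSne _ (fun _ _ _ _ => trivial) ⟨i₁, trivial⟩)
      (hTSdir _ (fun _ _ _ _ => trivial))
    have hb2 : (b.2 : ℝ≥0∞) = 0 := by
      refine le_antisymm ?_ zero_le
      refine ENNReal.le_of_forall_pos_le_add fun ε hε _ => ?_
      obtain ⟨p, hp, hpr⟩ := hTSradii _ (fun _ _ _ _ => trivial) ⟨i₁, trivial⟩ (ε : ℝ≥0∞)
        (by exact_mod_cast hε)
      calc (b.2 : ℝ≥0∞) ≤ (b.2 : ℝ≥0∞) + q.d p.1 b.1 := le_add_right le_rfl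
        _ ≤ (p.2 : ℝ≥0∞) := hbub p hp
        _ ≤ (ε : ℝ≥0∞) := hpr
        _ = 0 + (ε : ℝ≥0∞) := (zero_add _).symm
    have hxa : ∀ j, q.d (x j) b.1 ≤ s j := by
      intro j
      have := hTSub (fun _ => True) b hbub j trivial
      rwa [hb2, zero_add] at this
    refine ⟨b.1, fun y => ?_⟩
    set L : ℝ≥0∞ := ⨅ i, ⨆ j, ⨆ (_ : le i j), q.d (x j) y with hL
    refine le_antisymm ?_ ?_
    · -- d b.1 y ≤ L
      refine ENNReal.le_of_forall_pos_le_add fun ε hε hLlt => ?_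
      set c : ℝ≥0 := L.toNNReal + ε with hc
      have hccoe : (c : ℝ≥0∞) = L + (ε : ℝ≥0∞) := by
        rw [hc, ENNReal.coe_add, ENNReal.coe_toNNReal hLlt.ne]
      have hLc : L < (c : ℝ≥0∞) := by
        rw [hccoe]
        exact ENNReal.lt_add_right hLlt.ne (by exact_mod_cast hε.ne')
      obtain ⟨i₀, hi₀⟩ := iInf_lt_iff.1 (hL ▸ hLc)
      have hTy : ∀ j, le i₀ j → q.d (x j) y ≤ (c : ℝ≥0∞) := by
        intro j hj
        refine le_trans ?_ hi₀.le
        exact le_iSup₂ (f := fun (j : D) (_ : le i₀ j) => q.d (x j) y) j hj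
      have hPup : ∀ j l, le i₀ j → le j l → le i₀ l := fun j l hj hjl => htrans _ _ _ hj hjl
      have hPex : ∃ j, le i₀ j := ⟨i₀, hrefl i₀⟩
      set Tc : Set (X × ℝ≥0) := (fun p : X × ℝ≥0 => (p.1, p.2 + c)) '' TS (le i₀) with hTc
      have hkey : ∀ p p' : X × ℝ≥0,
          q.ballLE p p' ↔ q.ballLE (p.1, p.2 + c) (p'.1, p'.2 + c) := by
        intro p p'
        show ((p'.2 : ℝ≥0∞) + q.d p.1 p'.1 ≤ (p.2 : ℝ≥0∞)) ↔
          (((p'.2 + c : ℝ≥0) : ℝ≥0∞) + q.d p.1 p'.1 ≤ ((p.2 + c : ℝ≥0) : ℝ≥0∞))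
        push_cast
        constructor
        · intro h
          calc (p'.2 : ℝ≥0∞) + (c : ℝ≥0∞) + q.d p.1 p'.1
              = ((p'.2 : ℝ≥0∞) + q.d p.1 p'.1) + (c : ℝ≥0∞) := by ring
            _ ≤ (p.2 : ℝ≥0∞) + (c : ℝ≥0∞) := by gcongr
        · intro h
          have h' : ((p'.2 : ℝ≥0∞) + q.d p.1 p'.1) + (c : ℝ≥0∞) ≤ (p.2 : ℝ≥0∞) + (c : ℝ≥0∞) := by
            calc ((p'.2 : ℝ≥0∞) + q.d p.1 p'.1) + (c : ℝ≥0∞)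
                = (p'.2 : ℝ≥0∞) + (c : ℝ≥0∞) + q.d p.1 p'.1 := by ring
              _ ≤ (p.2 : ℝ≥0∞) + (c : ℝ≥0∞) := h
          exact (ENNReal.add_le_add_iff_right ENNReal.coe_ne_top).1 h'
      have hTcne : Tc.Nonempty := (hTSne _ hPup hPex).image _
      have hTcdir : DirectedOn q.ballLE Tc := by
        rintro _ ⟨p, hp, rfl⟩ _ ⟨p', hp', rfl⟩
        obtain ⟨z, hz, h1, h2⟩ := hTSdir _ hPup p hp p' hp'
        exact ⟨(z.1, z.2 + c), ⟨z, hz, rfl⟩, (hkey p z).1 h1, (hkey p' z).1 h2⟩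
      obtain ⟨b', hub', hleast'⟩ := hd Tc hTcne hTcdir
      have hA : ∀ p ∈ Tc, q.ballLE p (b.1, c) := by
        rintro _ ⟨p, ⟨j, hPj, hsj, hxj⟩, rfl⟩
        show (c : ℝ≥0∞) + q.d p.1 b.1 ≤ ((p.2 + c : ℝ≥0) : ℝ≥0∞)
        rw [hxj]
        push_cast
        calc (c : ℝ≥0∞) + q.d (x j) b.1 ≤ (c : ℝ≥0∞) + (p.2 : ℝ≥0∞) := by
              gcongr; exact (hxa j).trans hsj.le
          _ = (p.2 : ℝ≥0∞) + (c : ℝ≥0∞) := add_comm _ _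
      have hB : (c : ℝ≥0∞) + q.d b'.1 b.1 ≤ (b'.2 : ℝ≥0∞) := hleast' (b.1, c) hA
      have hb'le : (b'.2 : ℝ≥0∞) ≤ (c : ℝ≥0∞) := by
        refine ENNReal.le_of_forall_pos_le_add fun δ hδ _ => ?_
        obtain ⟨p, hp, hpr⟩ := hTSradii _ hPup hPex (δ : ℝ≥0∞) (by exact_mod_cast hδ)
        calc (b'.2 : ℝ≥0∞) ≤ (b'.2 : ℝ≥0∞) + q.d p.1 b'.1 := le_add_right le_rfl
          _ ≤ ((p.2 + c : ℝ≥0) : ℝ≥0∞) := hub' (p.1, p.2 + c) ⟨p, hp, rfl⟩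
          _ = (p.2 : ℝ≥0∞) + (c : ℝ≥0∞) := by push_cast; ring
          _ ≤ (δ : ℝ≥0∞) + (c : ℝ≥0∞) := by gcongr
          _ = (c : ℝ≥0∞) + (δ : ℝ≥0∞) := add_comm _ _
      have hcb' : (c : ℝ≥0∞) ≤ (b'.2 : ℝ≥0∞) := le_trans (le_add_right le_rfl) hB
      have hb'2 : (b'.2 : ℝ≥0∞) = (c : ℝ≥0∞) := le_antisymm hb'le hcb'
      have hdb'b : q.d b'.1 b.1 = 0 := by
        have h := hB.trans hb'le
        have h2 : (c : ℝ≥0∞) + q.d b'.1 b.1 ≤ (c : ℝ≥0∞) + 0 := by rwa [add_zero]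
        exact le_antisymm ((ENNReal.add_le_add_iff_left ENNReal.coe_ne_top).1 h2) zero_le
      have hD : ∀ j, le i₀ j → q.d (x j) b'.1 ≤ s j := by
        intro j hPj
        rcases eq_or_ne (s j) ⊤ with h | h
        · rw [h]; exact le_top
        refine le_of_forall_coe_gt fun r hr => ?_
        have hmem : ((x j, r + c) : X × ℝ≥0) ∈ Tc := ⟨(x j, r), ⟨j, hPj, hr, rfl⟩, rfl⟩
        have h2 : (b'.2 : ℝ≥0∞) + q.d (x j) b'.1 ≤ ((r + c : ℝ≥0) : ℝ≥0∞) := hub' _ hmem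
        rw [hb'2] at h2
        have h3 : (c : ℝ≥0∞) + q.d (x j) b'.1 ≤ (c : ℝ≥0∞) + (r : ℝ≥0∞) := by
          calc (c : ℝ≥0∞) + q.d (x j) b'.1 ≤ ((r + c : ℝ≥0) : ℝ≥0∞) := h2
            _ = (c : ℝ≥0∞) + (r : ℝ≥0∞) := by push_cast; ring
        exact (ENNReal.add_le_add_iff_left ENNReal.coe_ne_top).1 h3
      have hE : ∀ p ∈ TS (fun _ => True), q.ballLE p (b'.1, 0) := by
        rintro p ⟨k, -, hsk, hxk⟩
        show ((0 : ℝ≥0) : ℝ≥0∞) + q.d p.1 b'.1 ≤ (p.2 : ℝ≥0∞)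
        rw [hxk, ENNReal.coe_zero, zero_add]
        obtain ⟨m, hm⟩ := hs_small ((p.2 : ℝ≥0∞) - s k) (tsub_pos_of_lt hsk)
        obtain ⟨l₁, h1, h2⟩ := hdir k i₀
        obtain ⟨l, h3, h4⟩ := hdir l₁ m
        have hPl : le i₀ l := htrans _ _ _ h2 h3
        calc q.d (x k) b'.1 ≤ q.d (x k) (x l) + q.d (x l) b'.1 := q.d_triangle _ _ _
          _ ≤ s k + s m := add_le_add (hs_bound k k l (hrefl k) (htrans _ _ _ h1 h3))
              ((hD l hPl).trans (hs_anti m l h4))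
          _ ≤ s k + ((p.2 : ℝ≥0∞) - s k) := add_le_add le_rfl hm.le
          _ = (p.2 : ℝ≥0∞) := by rw [add_comm]; exact tsub_add_cancel_of_le hsk.le
      have hF : ((0 : ℝ≥0) : ℝ≥0∞) + q.d b.1 b'.1 ≤ (b.2 : ℝ≥0∞) := hbleast (b'.1, 0) hE
      have hdbb' : q.d b.1 b'.1 = 0 := by
        rw [ENNReal.coe_zero, zero_add, hb2] at hF
        exact le_antisymm hF zero_le
      have hab : b'.1 = b.1 := q.d_separated _ _ hdb'b hdbb'
      have hH : ∀ p ∈ Tc, q.ballLE p (y, 0) := by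
        rintro _ ⟨p, ⟨j, hPj, hsj, hxj⟩, rfl⟩
        show ((0 : ℝ≥0) : ℝ≥0∞) + q.d p.1 y ≤ ((p.2 + c : ℝ≥0) : ℝ≥0∞)
        rw [hxj, ENNReal.coe_zero, zero_add]
        push_cast
        exact (hTy j hPj).trans (le_add_self)
      have hI : ((0 : ℝ≥0) : ℝ≥0∞) + q.d b'.1 y ≤ (b'.2 : ℝ≥0∞) := hleast' (y, 0) hH
      rw [ENNReal.coe_zero, zero_add, hb'2] at hI
      calc q.d b.1 y = q.d b'.1 y := by rw [hab]
        _ ≤ (c : ℝ≥0∞) := hI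
        _ = L + (ε : ℝ≥0∞) := hccoe
    · -- L ≤ d b.1 y
      refine ENNReal.le_of_forall_pos_le_add fun ε hε _ => ?_
      obtain ⟨m, hm⟩ := hs_small (ε : ℝ≥0∞) (by exact_mod_cast hε)
      rw [hL]
      refine (iInf_le _ m).trans ?_
      refine iSup₂_le fun j hj => ?_
      calc q.d (x j) y ≤ q.d (x j) b.1 + q.d b.1 y := q.d_triangle _ _ _
        _ ≤ (ε : ℝ≥0∞) + q.d b.1 y := by
            gcongr
            exact (hxa j).trans ((hs_anti m j hj).trans hm.le)
        _ = q.d b.1 y + (ε : ℝ≥0∞) := add_comm _ _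
end

section
/- Let φ be a weight of a quasi-metric space (X,d). Then φ is an ideal if and only if inf_{x∈X} φ(x) = 0 and the set Bφ := {(x,r) ∈ BX : φ(x) < r} is a directed subset of BX. -/
open scoped ENNReal NNReal

universe u v w

open QuasiMetric in
/-- a weight `φ` is an ideal iff `inf_x φ x = 0` and
`Bφ = {(x, r) ∈ BX : φ x < r}` is a directed subset of `BX`. -/
theorem stmt6 {X : Type u} (q : QuasiMetric X) (φ : X → ℝ≥0∞) (hφ : q.IsWeight φ) :
    q.IsIdeal φ ↔
      ((⨅ x, φ x) = 0 ∧
        DirectedOn q.ballLE {p : X × ℝ≥0 | φ p.1 < (p.2 : ℝ≥0∞)}) := by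
  constructor
  · rintro ⟨-, hinf, hid⟩
    refine ⟨hinf, ?_⟩
    rintro ⟨x, r⟩ hx ⟨y, s⟩ hy
    simp only [Set.mem_setOf_eq] at hx hy
    have hlw : q.IsWeight (fun z => (r : ℝ≥0∞) - q.d x z) := by
      intro a b
      simp only
      rw [tsub_le_iff_right]
      calc (r : ℝ≥0∞) ≤ ((r : ℝ≥0∞) - q.d x b) + q.d x b := le_tsub_add
        _ ≤ ((r : ℝ≥0∞) - q.d x b) + (q.d x a + q.d a b) := by
            gcongr
            exact q.d_triangle x a b
        _ = (r : ℝ≥0∞) - q.d x b + q.d a b + q.d x a := by ring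
    have hmw : q.IsWeight (fun z => (s : ℝ≥0∞) - q.d y z) := by
      intro a b
      simp only
      rw [tsub_le_iff_right]
      calc (s : ℝ≥0∞) ≤ ((s : ℝ≥0∞) - q.d y b) + q.d y b := le_tsub_add
        _ ≤ ((s : ℝ≥0∞) - q.d y b) + (q.d y a + q.d a b) := by
            gcongr
            exact q.d_triangle y a b
        _ = (s : ℝ≥0∞) - q.d y b + q.d a b + q.d y a := by ring
    have h1 : 0 < rho φ (fun z => (r : ℝ≥0∞) - q.d x z) := by
      have h0 : (0:ℝ≥0∞) < ((r:ℝ≥0∞) - q.d x x) - φ x := by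
        rw [q.d_self, tsub_zero]
        exact tsub_pos_of_lt hx
      exact h0.trans_le (le_iSup (fun z => ((r:ℝ≥0∞) - q.d x z) - φ z) x)
    have h2 : 0 < rho φ (fun z => (s : ℝ≥0∞) - q.d y z) := by
      have h0 : (0:ℝ≥0∞) < ((s:ℝ≥0∞) - q.d y y) - φ y := by
        rw [q.d_self, tsub_zero]
        exact tsub_pos_of_lt hy
      exact h0.trans_le (le_iSup (fun z => ((s:ℝ≥0∞) - q.d y z) - φ z) y)
    have hpos : 0 < rho φ (fun z => min ((r:ℝ≥0∞) - q.d x z) ((s:ℝ≥0∞) - q.d y z)) := by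
      rw [hid _ _ hlw hmw]
      exact lt_min h1 h2
    rw [rho, lt_iSup_iff] at hpos
    obtain ⟨z, hz⟩ := hpos
    have hz' : φ z < min ((r:ℝ≥0∞) - q.d x z) ((s:ℝ≥0∞) - q.d y z) := tsub_pos_iff_lt.mp hz
    obtain ⟨c, hc1, hc2⟩ := exists_between hz'
    have hcr : c < (r:ℝ≥0∞) := hc2.trans_le ((min_le_left _ _).trans tsub_le_self)
    have hcne : c ≠ ∞ := (hcr.trans ENNReal.coe_lt_top).ne
    have hdx : q.d x z < (r:ℝ≥0∞) := by
      refine tsub_pos_iff_lt.mp ?_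
      exact (zero_le : 0 ≤ c).trans_lt (hc2.trans_le (min_le_left _ _))
    have hdy : q.d y z < (s:ℝ≥0∞) := by
      refine tsub_pos_iff_lt.mp ?_
      exact (zero_le : 0 ≤ c).trans_lt (hc2.trans_le (min_le_right _ _))
    refine ⟨⟨z, c.toNNReal⟩, ?_, ?_, ?_⟩
    · show φ z < (c.toNNReal : ℝ≥0∞)
      rwa [ENNReal.coe_toNNReal hcne]
    · show (c.toNNReal : ℝ≥0∞) + q.d x z ≤ (r:ℝ≥0∞)
      rw [ENNReal.coe_toNNReal hcne]
      calc c + q.d x z ≤ ((r:ℝ≥0∞) - q.d x z) + q.d x z :=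
            add_le_add_left (hc2.le.trans (min_le_left _ _)) _
        _ = (r:ℝ≥0∞) := tsub_add_cancel_of_le hdx.le
    · show (c.toNNReal : ℝ≥0∞) + q.d y z ≤ (s:ℝ≥0∞)
      rw [ENNReal.coe_toNNReal hcne]
      calc c + q.d y z ≤ ((s:ℝ≥0∞) - q.d y z) + q.d y z :=
            add_le_add_left (hc2.le.trans (min_le_right _ _)) _
        _ = (s:ℝ≥0∞) := tsub_add_cancel_of_le hdy.le
  · rintro ⟨hinf, hdir⟩
    refine ⟨hφ, hinf, fun l m hlw hmw => ?_⟩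
    apply le_antisymm
    · refine le_min ?_ ?_
      · exact iSup_mono fun z => tsub_le_tsub_right (min_le_left _ _) _
      · exact iSup_mono fun z => tsub_le_tsub_right (min_le_right _ _) _
    · have key : ∀ t' t'' : ℝ≥0∞, t' < t'' → t'' < min (rho φ l) (rho φ m) →
          t' ≤ rho φ (fun z => min (l z) (m z)) := by
        intro t' t'' htt h2
        have ht''top : t'' ≠ ∞ := (h2.trans_le le_top).ne
        set δ : ℝ≥0∞ := t'' - t' with hδdef
        have hδne : δ ≠ ∞ := (tsub_le_self.trans_lt (lt_top_iff_ne_top.mpr ht''top)).ne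
        have hδ' : t'' = t' + δ := by
          rw [hδdef, add_comm]
          exact (tsub_add_cancel_of_le htt.le).symm
        have hll : t'' < rho φ l := h2.trans_le (min_le_left _ _)
        have hmm : t'' < rho φ m := h2.trans_le (min_le_right _ _)
        rw [rho, lt_iSup_iff] at hll hmm
        obtain ⟨x, hx⟩ := hll
        obtain ⟨y, hy⟩ := hmm
        have hφx : φ x < l x := tsub_pos_iff_lt.mp ((zero_le : 0 ≤ t'').trans_lt hx)
        have hφy : φ y < m y := tsub_pos_iff_lt.mp ((zero_le : 0 ≤ t'').trans_lt hy)
        have hφxne : φ x ≠ ∞ := (hφx.trans_le le_top).ne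
        have hφyne : φ y ≠ ∞ := (hφy.trans_le le_top).ne
        have hxx : t'' + φ x < l x := by
          have h := (ENNReal.add_lt_add_iff_right hφxne).mpr hx
          rwa [tsub_add_cancel_of_le hφx.le] at h
        have hyy : t'' + φ y < m y := by
          have h := (ENNReal.add_lt_add_iff_right hφyne).mpr hy
          rwa [tsub_add_cancel_of_le hφy.le] at h
        have hKx : φ x + δ ≠ ∞ := ENNReal.add_ne_top.mpr ⟨hφxne, hδne⟩
        have hKy : φ y + δ ≠ ∞ := ENNReal.add_ne_top.mpr ⟨hφyne, hδne⟩
        have hδpos : 0 < δ := tsub_pos_of_lt htt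
        have hrx : ((φ x + δ).toNNReal : ℝ≥0∞) = φ x + δ := ENNReal.coe_toNNReal hKx
        have hry : ((φ y + δ).toNNReal : ℝ≥0∞) = φ y + δ := ENNReal.coe_toNNReal hKy
        have hmx : (⟨x, (φ x + δ).toNNReal⟩ : X × ℝ≥0) ∈
            {p : X × ℝ≥0 | φ p.1 < (p.2 : ℝ≥0∞)} := by
          show φ x < ((φ x + δ).toNNReal : ℝ≥0∞)
          rw [hrx]
          exact ENNReal.lt_add_right hφxne hδpos.ne'
        have hmy : (⟨y, (φ y + δ).toNNReal⟩ : X × ℝ≥0) ∈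
            {p : X × ℝ≥0 | φ p.1 < (p.2 : ℝ≥0∞)} := by
          show φ y < ((φ y + δ).toNNReal : ℝ≥0∞)
          rw [hry]
          exact ENNReal.lt_add_right hφyne hδpos.ne'
        obtain ⟨⟨z, c⟩, hzmem, hbx, hby⟩ := hdir _ hmx _ hmy
        have hzc : φ z < (c : ℝ≥0∞) := hzmem
        have hbx' : (c : ℝ≥0∞) + q.d x z ≤ φ x + δ := by
          have := hbx
          rwa [QuasiMetric.ballLE, hrx] at this
        have hby' : (c : ℝ≥0∞) + q.d y z ≤ φ y + δ := by
          have := hby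
          rwa [QuasiMetric.ballLE, hry] at this
        have stepx : (t' + c) + (φ x + δ) ≤ l z + (φ x + δ) := by
          calc (t' + c) + (φ x + δ) = t'' + φ x + c := by rw [hδ']; ring
            _ ≤ l x + c := add_le_add_left hxx.le c
            _ ≤ (l z + q.d x z) + c := add_le_add_left (hlw x z) c
            _ = l z + ((c : ℝ≥0∞) + q.d x z) := by ring
            _ ≤ l z + (φ x + δ) := add_le_add_right hbx' _
        have stepy : (t' + c) + (φ y + δ) ≤ m z + (φ y + δ) := by
          calc (t' + c) + (φ y + δ) = t'' + φ y + c := by rw [hδ']; ring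
            _ ≤ m y + c := add_le_add_left hyy.le c
            _ ≤ (m z + q.d y z) + c := add_le_add_left (hmw y z) c
            _ = m z + ((c : ℝ≥0∞) + q.d y z) := by ring
            _ ≤ m z + (φ y + δ) := add_le_add_right hby' _
        have hlz : t' + c ≤ l z := (ENNReal.add_le_add_iff_right hKx).mp stepx
        have hmz : t' + c ≤ m z := (ENNReal.add_le_add_iff_right hKy).mp stepy
        have hfin : t' + φ z ≤ min (l z) (m z) := by
          refine le_min ?_ ?_
          · exact (add_le_add_right hzc.le t').trans hlz
          · exact (add_le_add_right hzc.le t').trans hmz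
        have hφzne : φ z ≠ ∞ := (hzc.trans ENNReal.coe_lt_top).ne
        have : t' ≤ min (l z) (m z) - φ z := ENNReal.le_sub_of_add_le_right hφzne hfin
        exact this.trans (le_iSup (fun w => min (l w) (m w) - φ w) z)
      refine le_of_forall_lt fun c hc => ?_
      obtain ⟨c1, hc1, hc1'⟩ := exists_between hc
      obtain ⟨c2, hc2, hc2'⟩ := exists_between hc1'
      exact hc1.trans_le (key c1 c2 hc2 hc2')
end

section
/- Let φ be a weight of a quasi-metric space (X,d). Then φ is an ideal if and only if there exists a forward Cauchy net {x_i}_{i∈D} in X such that φ = inf_{i∈D} sup_{j≥i} d(−, x_j) (pointwise). -/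
open scoped ENNReal NNReal

universe u v w

section Aux
open QuasiMetric
variable {X : Type u} (q : QuasiMetric X)

lemma aux_isWeight_min {l m : X → ℝ≥0∞} (hl : q.IsWeight l) (hm : q.IsWeight m) :
    q.IsWeight fun x => min (l x) (m x) := fun x y => by
  calc min (l x) (m x) ≤ min (l y + q.d x y) (m y + q.d x y) := min_le_min (hl x y) (hm x y)
  _ = min (l y) (m y) + q.d x y := min_add_add_right _ _ _

lemma aux_isWeight_const (c : ℝ≥0∞) : q.IsWeight fun _ => c := fun _ _ => le_self_add

lemma aux_isWeight_sub (a : X) (ε : ℝ≥0∞) : q.IsWeight fun y => ε - q.d a y := fun x y => by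
  rw [tsub_le_iff_right]
  calc ε ≤ ε - q.d a y + q.d a y := le_tsub_add
  _ ≤ ε - q.d a y + (q.d a x + q.d x y) := by
      gcongr
      exact q.d_triangle a x y
  _ = ε - q.d a y + q.d x y + q.d a x := by ring

/-- Key step: from an ideal, below any two "formal balls" containing `φ` there is a
common smaller one with arbitrarily small radius. -/
lemma aux_step {φ : X → ℝ≥0∞} (hI : q.IsIdeal φ) {a b : X} {ε δ η : ℝ≥0∞}
    (ha : φ a < ε) (hb : φ b < δ) (hη : 0 < η) :
    ∃ c γ, φ c < γ ∧ γ + q.d a c ≤ ε ∧ γ + q.d b c ≤ δ ∧ γ ≤ η ∧ γ ≠ ⊤ := by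
  obtain ⟨hw, hinf, hprime⟩ := hI
  set c₀ : ℝ≥0∞ := min (min (ε - φ a) (δ - φ b)) (min η 1) with hc₀
  have hc₀0 : 0 < c₀ :=
    lt_min (lt_min (tsub_pos_iff_lt.mpr ha) (tsub_pos_iff_lt.mpr hb)) (lt_min hη one_pos)
  have hc₀le1 : c₀ ≤ 1 := (min_le_right _ _).trans (min_le_right _ _)
  have hc₀top : c₀ ≠ ⊤ := (hc₀le1.trans_lt (by norm_num)).ne
  have hl1 := aux_isWeight_sub q a ε
  have hl2 := aux_isWeight_sub q b δ
  have hl3 := aux_isWeight_const q c₀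
  have key : rho φ (fun y => min (ε - q.d a y) (min (δ - q.d b y) c₀)) =
      min (rho φ fun y => ε - q.d a y) (min (rho φ fun y => δ - q.d b y) (rho φ fun _ => c₀)) := by
    rw [hprime _ _ hl1 (aux_isWeight_min q hl2 hl3), hprime _ _ hl2 hl3]
  have h1 : ε - φ a ≤ rho φ fun y => ε - q.d a y := by
    have := le_iSup (fun y => (ε - q.d a y) - φ y) a
    simpa [q.d_self, rho] using this
  have h2 : δ - φ b ≤ rho φ fun y => δ - q.d b y := by
    have := le_iSup (fun y => (δ - q.d b y) - φ y) b
    simpa [q.d_self, rho] using this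
  have h3 : rho φ (fun _ => c₀) = c₀ := by
    rw [rho, ← ENNReal.sub_iInf, hinf, tsub_zero]
  have hkey2 : c₀ ≤ rho φ (fun y => min (ε - q.d a y) (min (δ - q.d b y) c₀)) := by
    rw [key]
    refine le_min (le_trans ?_ h1) (le_min (le_trans ?_ h2) (by rw [h3]))
    · exact (min_le_left _ _).trans (min_le_left _ _)
    · exact (min_le_left _ _).trans (min_le_right _ _)
  obtain ⟨c, hc⟩ : ∃ c, c₀ / 2 < min (ε - q.d a c) (min (δ - q.d b c) c₀) - φ c := by
    have : c₀ / 2 < rho φ (fun y => min (ε - q.d a y) (min (δ - q.d b y) c₀)) :=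
      lt_of_lt_of_le (ENNReal.half_lt_self hc₀0.ne' hc₀top) hkey2
    rw [rho] at this
    exact lt_iSup_iff.mp this
  rw [lt_tsub_iff_right] at hc
  have hA : c₀ / 2 + φ c < ε - q.d a c := hc.trans_le (min_le_left _ _)
  have hB : c₀ / 2 + φ c < δ - q.d b c := hc.trans_le ((min_le_right _ _).trans (min_le_left _ _))
  have hC : c₀ / 2 + φ c < c₀ := hc.trans_le ((min_le_right _ _).trans (min_le_right _ _))
  rw [lt_tsub_iff_right] at hA hB
  have hφc : φ c ≠ ⊤ := ne_top_of_lt (le_add_self.trans_lt hC)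
  have hC' : φ c + c₀ / 2 < c₀ := by rw [add_comm]; exact hC
  refine ⟨c, φ c + c₀ / 2, ?_, ?_, ?_, ?_, ?_⟩
  · exact ENNReal.lt_add_right hφc (ENNReal.half_pos hc₀0.ne').ne'
  · rw [add_comm (φ c) (c₀ / 2)]; exact hA.le
  · rw [add_comm (φ c) (c₀ / 2)]; exact hB.le
  · exact hC'.le.trans ((min_le_right _ _).trans (min_le_left _ _))
  · exact ne_top_of_lt hC'

/-- For `φ` arising from a forward Cauchy net, `ρ(φ, l)` is the "limsup" of `l` along
the net, for any weight `l`. -/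
lemma aux_net_rho {D : Type v} {dle : D → D → Prop} (hD : DirectedPre dle) (x : D → X)
    (hFC : q.ForwardCauchy dle x) (φ : X → ℝ≥0∞)
    (hform : ∀ y, φ y = ⨅ i, ⨆ j, ⨆ (_ : dle i j), q.d y (x j))
    {l : X → ℝ≥0∞} (hl : q.IsWeight l) :
    rho φ l = ⨅ i, ⨆ j, ⨆ (_ : dle i j), l (x j) := by
  have hφnet : ∀ j, φ (x j) ≤ ⨆ k, ⨆ (_ : dle j k), q.d (x j) (x k) := by
    intro j
    rw [hform]
    exact iInf_le _ j
  refine le_antisymm ?_ ?_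
  · -- rho φ l ≤ limsup
    refine iSup_le fun y => le_iInf fun i => ?_
    set S := ⨆ j, ⨆ (_ : dle i j), l (x j) with hS
    rw [tsub_le_iff_left]
    -- l y ≤ φ y + S
    have hyS : l y - S ≤ φ y := by
      rw [hform]
      refine le_iInf fun i' => ?_
      obtain ⟨k, hik, hi'k⟩ := hD.2.2 i i'
      refine le_trans ?_ (le_iSup_of_le k (le_iSup_of_le hi'k le_rfl))
      rw [tsub_le_iff_left]
      calc l y ≤ l (x k) + q.d y (x k) := hl y (x k)
      _ ≤ S + q.d y (x k) := by
          gcongr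
          exact le_iSup_of_le k (le_iSup_of_le hik le_rfl)
    calc l y ≤ (l y - S) + S := le_tsub_add
    _ ≤ φ y + S := by gcongr
  · -- limsup ≤ rho φ l
    refine ENNReal.le_of_forall_pos_le_add fun ε hε _ => ?_
    obtain ⟨i₀, hi₀⟩ : ∃ i₀, (⨆ j, ⨆ (_ : dle i₀ j), ⨆ k, ⨆ (_ : dle j k), q.d (x j) (x k))
        < (ε : ℝ≥0∞) := by
      refine iInf_lt_iff.mp ?_
      rw [hFC]
      exact ENNReal.coe_pos.mpr hε
    refine le_trans (iInf_le _ i₀) ?_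
    refine iSup_le fun j => iSup_le fun hj => ?_
    have hφj : φ (x j) ≤ (ε : ℝ≥0∞) := by
      refine le_trans (hφnet j) (le_of_lt (lt_of_le_of_lt ?_ hi₀))
      exact le_iSup_of_le j (le_iSup_of_le hj le_rfl)
    calc l (x j) ≤ (l (x j) - φ (x j)) + φ (x j) := le_tsub_add
    _ ≤ rho φ l + ε := by
        gcongr
        exact le_iSup (fun y => l y - φ y) (x j)

/-- The limsup functional along a forward Cauchy net is min-preserving on weights. -/
lemma aux_net_min {D : Type v} {dle : D → D → Prop} (hD : DirectedPre dle) (x : D → X)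
    (hFC : q.ForwardCauchy dle x) {l m : X → ℝ≥0∞} (hl : q.IsWeight l) (hm : q.IsWeight m) :
    min (⨅ i, ⨆ j, ⨆ (_ : dle i j), l (x j)) (⨅ i, ⨆ j, ⨆ (_ : dle i j), m (x j)) ≤
      ⨅ i, ⨆ j, ⨆ (_ : dle i j), min (l (x j)) (m (x j)) := by
  refine le_iInf fun i => ?_
  refine ENNReal.le_of_forall_pos_le_add fun ε hε _ => ?_
  set T := ⨆ j, ⨆ (_ : dle i j), min (l (x j)) (m (x j)) with hT
  obtain ⟨i₀, hi₀⟩ : ∃ i₀, (⨆ j, ⨆ (_ : dle i₀ j), ⨆ k, ⨆ (_ : dle j k), q.d (x j) (x k))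
      < (ε : ℝ≥0∞) := by
    refine iInf_lt_iff.mp ?_
    rw [hFC]
    exact ENNReal.coe_pos.mpr hε
  obtain ⟨i₁, hi₁, hi₁'⟩ := hD.2.2 i i₀
  by_contra hcon
  push_neg at hcon
  have hlA : T + ε < ⨆ j, ⨆ (_ : dle i₁ j), l (x j) :=
    lt_of_lt_of_le (lt_of_lt_of_le hcon (min_le_left _ _)) (iInf_le _ i₁)
  have hlB : T + ε < ⨆ j, ⨆ (_ : dle i₁ j), m (x j) :=
    lt_of_lt_of_le (lt_of_lt_of_le hcon (min_le_right _ _)) (iInf_le _ i₁)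
  obtain ⟨j₁, hj₁, hj₁'⟩ : ∃ j₁, dle i₁ j₁ ∧ T + ε < l (x j₁) := by
    obtain ⟨j₁, h⟩ := lt_iSup_iff.mp hlA
    obtain ⟨hj, h'⟩ := lt_iSup_iff.mp h
    exact ⟨j₁, hj, h'⟩
  obtain ⟨j₂, hj₂, hj₂'⟩ : ∃ j₂, dle i₁ j₂ ∧ T + ε < m (x j₂) := by
    obtain ⟨j₂, h⟩ := lt_iSup_iff.mp hlB
    obtain ⟨hj, h'⟩ := lt_iSup_iff.mp h
    exact ⟨j₂, hj, h'⟩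
  obtain ⟨k, hk₁, hk₂⟩ := hD.2.2 j₁ j₂
  have hd : ∀ j', dle i₁ j' → dle j' k → q.d (x j') (x k) ≤ (ε : ℝ≥0∞) := by
    intro j' h1 h2
    refine le_of_lt (lt_of_le_of_lt ?_ hi₀)
    exact le_iSup_of_le j' (le_iSup_of_le (hD.2.1 _ _ _ hi₁' h1)
      (le_iSup_of_le k (le_iSup_of_le h2 le_rfl)))
  have hlk : T + ε < l (x k) + ε :=
    lt_of_lt_of_le hj₁' ((hl (x j₁) (x k)).trans (by gcongr; exact hd j₁ hj₁ hk₁))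
  have hmk : T + ε < m (x k) + ε :=
    lt_of_lt_of_le hj₂' ((hm (x j₂) (x k)).trans (by gcongr; exact hd j₂ hj₂ hk₂))
  have hmin : T + ε < min (l (x k)) (m (x k)) + ε := by
    rw [← min_add_add_right]
    exact lt_min hlk hmk
  have hTk : min (l (x k)) (m (x k)) ≤ T :=
    le_iSup_of_le k (le_iSup_of_le (hD.2.1 _ _ _ (hD.2.1 _ _ _ hi₁ hj₁) hk₁) le_rfl)
  exact absurd (hmin.trans_le (by gcongr)) (lt_irrefl _)


/-- The directed set of formal balls strictly containing an ideal `φ`. -/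
def AuxD (q : QuasiMetric X) (φ : X → ℝ≥0∞) : Type u :=
  {p : X × ℝ≥0∞ // φ p.1 < p.2 ∧ p.2 ≠ ⊤}

/-- The (opposite) formal-ball order on `AuxD`. -/
def auxLE (q : QuasiMetric X) (φ : X → ℝ≥0∞) (p p' : AuxD q φ) : Prop :=
  p'.1.2 + q.d p.1.1 p'.1.1 ≤ p.1.2

/-- The net of centers. -/
def auxX (q : QuasiMetric X) (φ : X → ℝ≥0∞) (p : AuxD q φ) : X := p.1.1

variable {φ : X → ℝ≥0∞}

lemma aux_directedPre (hI : q.IsIdeal φ) : DirectedPre (auxLE q φ) := by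
  refine ⟨fun p => ?_, fun p p' p'' h h' => ?_, fun p p' => ?_⟩
  · show p.1.2 + q.d p.1.1 p.1.1 ≤ p.1.2
    simp [q.d_self]
  · show p''.1.2 + q.d p.1.1 p''.1.1 ≤ p.1.2
    calc p''.1.2 + q.d p.1.1 p''.1.1
        ≤ p''.1.2 + (q.d p.1.1 p'.1.1 + q.d p'.1.1 p''.1.1) := by
          gcongr
          exact q.d_triangle _ _ _
    _ = (p''.1.2 + q.d p'.1.1 p''.1.1) + q.d p.1.1 p'.1.1 := by ring
    _ ≤ p'.1.2 + q.d p.1.1 p'.1.1 := by gcongr; exact h'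
    _ ≤ p.1.2 := h
  · obtain ⟨c, γ, h1, h2, h3, _, h5⟩ :=
      aux_step q hI p.2.1 p'.2.1 (zero_lt_one (α := ℝ≥0∞))
    exact ⟨⟨(c, γ), h1, h5⟩, h2, h3⟩

lemma aux_nonempty (hI : q.IsIdeal φ) : Nonempty (AuxD q φ) := by
  obtain ⟨a₀, ha₀⟩ : ∃ a, φ a < 1 := by
    refine iInf_lt_iff.mp ?_
    rw [hI.2.1]
    exact zero_lt_one
  exact ⟨⟨(a₀, 1), ha₀, ENNReal.one_ne_top⟩⟩

lemma aux_fc (hI : q.IsIdeal φ) : q.ForwardCauchy (auxLE q φ) (auxX q φ) := by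
  refine le_antisymm ?_ zero_le
  refine ENNReal.le_of_forall_pos_le_add fun ε hε _ => ?_
  obtain ⟨a, ha⟩ : ∃ a, φ a < (ε : ℝ≥0∞) := by
    refine iInf_lt_iff.mp ?_
    rw [hI.2.1]
    exact ENNReal.coe_pos.mpr hε
  refine le_trans (iInf_le _ ⟨(a, ε), ha, ENNReal.coe_ne_top⟩) ?_
  rw [zero_add]
  refine iSup_le fun j => iSup_le fun hj => iSup_le fun k => iSup_le fun hk => ?_
  exact (le_trans le_add_self hk).trans (le_trans le_self_add hj)

lemma aux_formula (hI : q.IsIdeal φ) (hφ : q.IsWeight φ) (y : X) :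
    φ y = ⨅ i, ⨆ j, ⨆ (_ : auxLE q φ i j), q.d y (auxX q φ j) := by
  refine le_antisymm (le_iInf fun i => ?_) ?_
  · refine ENNReal.le_of_forall_pos_le_add fun η hη _ => ?_
    obtain ⟨c, γ, h1, h2, _, h4, h5⟩ :=
      aux_step q hI i.2.1 i.2.1 (ENNReal.coe_pos.mpr hη)
    have hmem : auxLE q φ i ⟨(c, γ), h1, h5⟩ := h2
    calc φ y ≤ φ c + q.d y c := hφ y c
    _ ≤ q.d y c + γ := by
        rw [add_comm]
        exact add_le_add le_rfl h1.le
    _ ≤ (⨆ j, ⨆ (_ : auxLE q φ i j), q.d y (auxX q φ j)) + η :=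
        add_le_add (le_iSup_of_le ⟨(c, γ), h1, h5⟩ (le_iSup_of_le hmem le_rfl)) h4
  · refine ENNReal.le_of_forall_pos_le_add fun η hη hytop => ?_
    have hlt : φ y < φ y + η :=
      ENNReal.lt_add_right hytop.ne (ENNReal.coe_ne_zero.mpr hη.ne')
    obtain ⟨c, γ, h1, h2, _, _, h5⟩ := aux_step q hI hlt hlt (zero_lt_one (α := ℝ≥0∞))
    refine le_trans (iInf_le _ ⟨(c, γ), h1, h5⟩) ?_
    refine iSup_le fun j => iSup_le fun hj => ?_
    calc q.d y (auxX q φ j) ≤ q.d y c + q.d c (auxX q φ j) := q.d_triangle _ _ _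
    _ ≤ q.d y c + γ := by
        gcongr
        exact le_trans le_add_self hj
    _ ≤ φ y + η := by
        rw [add_comm]
        exact h2

end Aux

open QuasiMetric in
/-- a weight `φ` is an ideal iff there is a forward Cauchy net `{x_i}` with
`φ = inf_i sup_{j ≥ i} d (−, x_j)` pointwise. -/
theorem stmt7 {X : Type u} (q : QuasiMetric X) (φ : X → ℝ≥0∞) (hφ : q.IsWeight φ) :
    q.IsIdeal φ ↔
      ∃ (D : Type u) (le : D → D → Prop), DirectedPre le ∧ Nonempty D ∧
        ∃ x : D → X, q.ForwardCauchy le x ∧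
          ∀ y, φ y = ⨅ i, ⨆ j, ⨆ (_ : le i j), q.d y (x j) := by
  constructor
  · intro hI
    exact ⟨AuxD q φ, auxLE q φ, aux_directedPre q hI, aux_nonempty q hI, auxX q φ,
      aux_fc q hI, fun y => aux_formula q hI hφ y⟩
  · rintro ⟨D, dle, hD, hne, x, hFC, hform⟩
    refine ⟨hφ, ?_, ?_⟩
    · refine le_antisymm ?_ zero_le
      rw [← hFC]
      refine le_iInf fun i => ?_
      refine le_trans (iInf_le φ (x i)) ?_
      rw [hform]
      refine le_trans (iInf_le _ i) ?_
      refine iSup_le fun j => iSup_le fun hj => ?_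
      exact le_iSup_of_le i (le_iSup_of_le (hD.1 i)
        (le_iSup_of_le j (le_iSup_of_le hj le_rfl)))
    · intro l m hl hm
      have h1 := aux_net_rho q hD x hFC φ hform hl
      have h2 := aux_net_rho q hD x hFC φ hform hm
      have h3 := aux_net_rho q hD x hFC φ hform (aux_isWeight_min q hl hm)
      refine le_antisymm ?_ ?_
      · refine le_min ?_ ?_
        · exact iSup_le fun y =>
            le_trans (tsub_le_tsub_right (min_le_left _ _) _) (le_iSup (fun z => l z - φ z) y)
        · exact iSup_le fun y =>
            le_trans (tsub_le_tsub_right (min_le_right _ _) _) (le_iSup (fun z => m z - φ z) y)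
      · rw [h1, h2, h3]
        exact aux_net_min q hD x hFC hl hm
end

section
/- Let {x_i}_{i∈D} be a forward Cauchy net in a quasi-metric space (X,d) and let φ = inf_{i∈D} sup_{j≥i} d(−, x_j) be the ideal it generates. Then an element x ∈ X is a Yoneda limit of {x_i}_{i∈D} if and only if x is a colimit of the weight φ. -/
open scoped ENNReal NNReal

universe u v w

private lemma stmt8_key {X : Type u} (q : QuasiMetric X) {D : Type v}
    (le : D → D → Prop) (hle : QuasiMetric.DirectedPre le)
    (x : D → X) (hx : q.ForwardCauchy le x) (y : X) :
    (⨅ i, ⨆ j, ⨆ (_ : le i j), q.d (x j) y)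
      = ⨆ z, q.d z y - ⨅ i, ⨆ j, ⨆ (_ : le i j), q.d z (x j) := by
  obtain ⟨-, -, hdir⟩ := hle
  set d := q.d
  set φ := fun z => ⨅ i, ⨆ j, ⨆ (_ : le i j), d z (x j) with hφ
  set R := ⨆ z, d z y - φ z with hRdef
  apply le_antisymm
  · have step : ∀ m, (⨆ j, ⨆ (_ : le m j), d (x j) y)
        ≤ R + ⨆ j, ⨆ (_ : le m j), ⨆ k, ⨆ (_ : le j k), d (x j) (x k) := by
      intro m
      refine iSup₂_le fun j hj => ?_
      have h1 : d (x j) y ≤ (d (x j) y - φ (x j)) + φ (x j) := le_tsub_add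
      have h2 : d (x j) y - φ (x j) ≤ R := le_iSup (fun z => d z y - φ z) (x j)
      have h3 : φ (x j) ≤ ⨆ j', ⨆ (_ : le m j'), ⨆ k, ⨆ (_ : le j' k), d (x j') (x k) := by
        refine (iInf_le _ j).trans ?_
        refine iSup₂_le fun k hk => ?_
        exact le_iSup₂_of_le j hj (le_iSup₂_of_le k hk le_rfl)
      exact h1.trans (add_le_add h2 h3)
    calc (⨅ i, ⨆ j, ⨆ (_ : le i j), d (x j) y)
        ≤ ⨅ m, (R + ⨆ j, ⨆ (_ : le m j), ⨆ k, ⨆ (_ : le j k), d (x j) (x k)) :=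
          le_iInf fun m => (iInf_le _ m).trans (step m)
    _ = R + ⨅ m, ⨆ j, ⨆ (_ : le m j), ⨆ k, ⨆ (_ : le j k), d (x j) (x k) := by
          rw [ENNReal.add_iInf]
    _ = R := by rw [hx, add_zero]
  · refine iSup_le fun z => ?_
    rw [tsub_le_iff_right]
    have hsplit : (⨅ i, ⨆ j, ⨆ (_ : le i j), d (x j) y) + φ z
        = ⨅ i, ⨅ i', ((⨆ j, ⨆ (_ : le i j), d (x j) y) + ⨆ j, ⨆ (_ : le i' j), d z (x j)) := by
      rw [ENNReal.iInf_add]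
      refine iInf_congr fun i => ?_
      rw [ENNReal.add_iInf]
    rw [hsplit]
    refine le_iInf fun i => le_iInf fun i' => ?_
    obtain ⟨k, hik, hi'k⟩ := hdir i i'
    calc d z y ≤ d z (x k) + d (x k) y := q.d_triangle _ _ _
    _ = d (x k) y + d z (x k) := add_comm _ _
    _ ≤ (⨆ j, ⨆ (_ : le i j), d (x j) y) + ⨆ j, ⨆ (_ : le i' j), d z (x j) :=
        add_le_add (le_iSup₂_of_le k hik le_rfl) (le_iSup₂_of_le k hi'k le_rfl)

open QuasiMetric in
/-- for a forward Cauchy net `{x_i}` generating the ideal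
`φ = inf_i sup_{j ≥ i} d (−, x_j)`, an element `a` is a Yoneda limit of `{x_i}` iff it is
a colimit of the weight `φ`. -/
theorem stmt8 {X : Type u} (q : QuasiMetric X) {D : Type v}
    (le : D → D → Prop) (hle : DirectedPre le) (hne : Nonempty D)
    (x : D → X) (hx : q.ForwardCauchy le x) (a : X) :
    q.IsYonedaLimit le x a ↔
      q.IsColimit (fun y => ⨅ i, ⨆ j, ⨆ (_ : le i j), q.d y (x j)) a := by
  unfold IsYonedaLimit IsColimit
  refine forall_congr' fun y => ?_
  rw [stmt8_key q le hle x hx y]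
end

section
/- Let {x_i}_{i∈D} be a forward Cauchy net in a quasi-metric space (X,d_X), let φ = inf_{i∈D} sup_{j≥i} d_X(−, x_j) be the ideal it generates, and let f : (X,d_X) → (Y,d_Y) be a non-expansive map. Then the pushforward weight f^→(φ), given by f^→(φ)(y) = inf_{x∈X} (φ(x) + d_Y(y, f(x))), equals inf_{i∈D} sup_{j≥i} d_Y(−, f(x_j)), the ideal generated by the forward Cauchy net {f(x_i)}_{i∈D} of (Y,d_Y). -/
open scoped ENNReal NNReal

universe u v w

open QuasiMetric in
/-- for a forward Cauchy net `{x_i}` generating the ideal `φ` and a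
non-expansive map `f`, the pushforward `f^→(φ)(y) = inf_x (φ x + d_Y (y, f x))` equals
the ideal `inf_i sup_{j ≥ i} d_Y (−, f (x_j))` generated by `{f (x_i)}`. -/
theorem stmt9 {X : Type u} {Y : Type v} (qX : QuasiMetric X) (qY : QuasiMetric Y)
    (f : X → Y) (hf : ∀ x x', qY.d (f x) (f x') ≤ qX.d x x')
    {D : Type w} (le : D → D → Prop) (hle : DirectedPre le) (hne : Nonempty D)
    (x : D → X) (hx : qX.ForwardCauchy le x) :
    ∀ y : Y,
      (⨅ x' : X, ((⨅ i, ⨆ j, ⨆ (_ : le i j), qX.d x' (x j)) + qY.d y (f x')))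
        = ⨅ i, ⨆ j, ⨆ (_ : le i j), qY.d y (f (x j)) := by
  intro y
  obtain ⟨hrefl, htrans, hdir⟩ := hle
  apply le_antisymm
  · apply ENNReal.le_of_forall_pos_le_add
    intro ε hε _
    have h0 : (⨅ i, ⨆ j, ⨆ (_ : le i j), ⨆ k, ⨆ (_ : le j k), qX.d (x j) (x k)) < (ε : ℝ≥0∞) := by
      rw [hx]; exact ENNReal.coe_pos.mpr hε
    obtain ⟨i0, hi0⟩ := iInf_lt_iff.mp h0
    rw [ENNReal.iInf_add]
    refine le_iInf fun i => ?_
    obtain ⟨i', hi'0, hi'⟩ := hdir i0 i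
    calc (⨅ x' : X, ((⨅ i, ⨆ j, ⨆ (_ : le i j), qX.d x' (x j)) + qY.d y (f x')))
        ≤ (⨅ i'', ⨆ j, ⨆ (_ : le i'' j), qX.d (x i') (x j)) + qY.d y (f (x i')) :=
          iInf_le _ _
      _ ≤ (ε : ℝ≥0∞) + (⨆ j, ⨆ (_ : le i j), qY.d y (f (x j))) := by
          apply add_le_add
          · refine le_trans (iInf_le _ i') ?_
            refine iSup_le fun j => iSup_le fun hj => le_trans ?_ hi0.le
            exact le_iSup₂_of_le i' hi'0 (le_iSup₂_of_le j hj le_rfl)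
          · exact le_iSup₂_of_le i' hi' le_rfl
      _ = (⨆ j, ⨆ (_ : le i j), qY.d y (f (x j))) + (ε : ℝ≥0∞) := add_comm _ _
  · refine le_iInf fun x' => ?_
    rw [ENNReal.iInf_add]
    refine le_iInf fun i => ?_
    refine le_trans (iInf_le _ i) ?_
    refine iSup_le fun j => iSup_le fun hj => ?_
    calc qY.d y (f (x j)) ≤ qY.d y (f x') + qY.d (f x') (f (x j)) := qY.d_triangle _ _ _
      _ ≤ qY.d y (f x') + qX.d x' (x j) := add_le_add le_rfl (hf _ _)
      _ ≤ qY.d y (f x') + (⨆ j, ⨆ (_ : le i j), qX.d x' (x j)) :=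
          add_le_add le_rfl (le_iSup₂_of_le j hj (le_refl (qX.d x' (x j))))
      _ = (⨆ j, ⨆ (_ : le i j), qX.d x' (x j)) + qY.d y (f x') := add_comm _ _
end

section
/- Let (X,d) be a quasi-metric space and let 𝓑X denote the set of bounded weights of (X,d), equipped with the quasi-metric ρ(φ,ψ) = sup_{x∈X} (ψ(x) ⊖ φ(x)). If Φ : 𝓑X → [0,∞] is a bounded weight of the quasi-metric space (𝓑X, ρ), then the map x ↦ inf_{φ∈𝓑X} (Φ(φ) + φ(x)) is a bounded weight of (X,d). -/
open scoped ENNReal NNReal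

universe u v w

open QuasiMetric in
/-- if `Φ` is a bounded weight of the quasi-metric space `𝓑X` of bounded
weights of `(X, d)` (with quasi-metric `ρ`), then `x ↦ inf_{φ ∈ 𝓑X} (Φ φ + φ x)` is a
bounded weight of `(X, d)`. -/
theorem stmt12 {X : Type u} (q : QuasiMetric X)
    (Φ : {φ : X → ℝ≥0∞ // q.IsWeight φ ∧ q.BoundedWeight φ} → ℝ≥0∞)
    (hΦw : (q.weightSpace fun φ => q.IsWeight φ ∧ q.BoundedWeight φ).IsWeight Φ)
    (hΦb : (q.weightSpace fun φ => q.IsWeight φ ∧ q.BoundedWeight φ).BoundedWeight Φ) :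
    (q.IsWeight fun x => ⨅ φ : {φ : X → ℝ≥0∞ // q.IsWeight φ ∧ q.BoundedWeight φ},
        Φ φ + φ.1 x) ∧
    (q.BoundedWeight fun x => ⨅ φ : {φ : X → ℝ≥0∞ // q.IsWeight φ ∧ q.BoundedWeight φ},
        Φ φ + φ.1 x) := by
  constructor
  · intro x y
    rw [ENNReal.iInf_add]
    refine le_iInf fun φ => (iInf_le _ φ).trans ?_
    rw [add_assoc]
    exact add_le_add_right (φ.2.1 x y) _
  · obtain ⟨r, ψ, hψ⟩ := hΦb
    obtain ⟨s, a, ha⟩ := ψ.2.2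
    refine ⟨s + r, a, fun x => ?_⟩
    have h1 : ∀ φ : {φ : X → ℝ≥0∞ // q.IsWeight φ ∧ q.BoundedWeight φ},
        ψ.1 x ≤ r + (Φ φ + φ.1 x) := fun φ => by
      have := (hψ φ).trans' (le_iSup (fun y => ψ.1 y - φ.1 y) x)
      calc ψ.1 x ≤ (ψ.1 x - φ.1 x) + φ.1 x := le_tsub_add
        _ ≤ (r + Φ φ) + φ.1 x := add_le_add_left this _
        _ = r + (Φ φ + φ.1 x) := add_assoc _ _ _
    calc q.d x a ≤ s + ψ.1 x := ha x
      _ ≤ s + (r + ⨅ φ : {φ : X → ℝ≥0∞ // q.IsWeight φ ∧ q.BoundedWeight φ},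
            Φ φ + φ.1 x) := by
          refine add_le_add_right ?_ _
          rw [ENNReal.add_iInf]
          exact le_iInf fun φ => h1 φ
      _ = (↑(s + r) : ℝ≥0∞) + _ := by push_cast; rw [add_assoc]
end

section
/- Let (X,d) be a quasi-metric space and let 𝓙X denote the set of bounded ideals of (X,d), equipped with the quasi-metric ρ(φ,ψ) = sup_{x∈X} (ψ(x) ⊖ φ(x)). If Φ : 𝓙X → [0,∞] is a bounded ideal of the quasi-metric space (𝓙X, ρ), then the map x ↦ inf_{φ∈𝓙X} (Φ(φ) + φ(x)) is a bounded ideal of (X,d). -/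
open scoped ENNReal NNReal

universe u v w

open QuasiMetric in
private theorem rho_triangle {X : Type u} (q : QuasiMetric X) (φ ψ χ : X → ℝ≥0∞) :
    rho φ χ ≤ rho φ ψ + rho ψ χ := by
  refine iSup_le fun x => ?_
  calc χ x - φ x ≤ (χ x - ψ x) + (ψ x - φ x) := tsub_le_tsub_add_tsub
  _ ≤ rho ψ χ + rho φ ψ :=
      add_le_add (le_iSup (fun y => χ y - ψ y) x) (le_iSup (fun y => ψ y - φ y) x)
  _ = rho φ ψ + rho ψ χ := add_comm _ _

open QuasiMetric in
/-- if `Φ` is a bounded ideal of the quasi-metric space `𝓙X` of bounded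
ideals of `(X, d)` (with quasi-metric `ρ`), then `x ↦ inf_{φ ∈ 𝓙X} (Φ φ + φ x)` is a
bounded ideal of `(X, d)`. -/
theorem stmt13 {X : Type u} (q : QuasiMetric X)
    (Φ : {φ : X → ℝ≥0∞ // q.IsIdeal φ ∧ q.BoundedWeight φ} → ℝ≥0∞)
    (hΦi : (q.weightSpace fun φ => q.IsIdeal φ ∧ q.BoundedWeight φ).IsIdeal Φ)
    (hΦb : (q.weightSpace fun φ => q.IsIdeal φ ∧ q.BoundedWeight φ).BoundedWeight Φ) :
    (q.IsIdeal fun x => ⨅ φ : {φ : X → ℝ≥0∞ // q.IsIdeal φ ∧ q.BoundedWeight φ},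
        Φ φ + φ.1 x) ∧
    (q.BoundedWeight fun x => ⨅ φ : {φ : X → ℝ≥0∞ // q.IsIdeal φ ∧ q.BoundedWeight φ},
        Φ φ + φ.1 x) := by
  classical
  -- J is nonempty
  have hJne : Nonempty {φ : X → ℝ≥0∞ // q.IsIdeal φ ∧ q.BoundedWeight φ} := by
    by_contra h
    rw [not_nonempty_iff] at h
    have h0 := hΦi.2.1
    rw [iInf_of_empty] at h0
    exact (ENNReal.top_ne_zero h0)
  obtain ⟨φ₀⟩ := hJne
  have hJne : Nonempty {φ : X → ℝ≥0∞ // q.IsIdeal φ ∧ q.BoundedWeight φ} := ⟨φ₀⟩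
  obtain ⟨r₀, a₀, _⟩ := φ₀.2.2
  have hXne : Nonempty X := ⟨a₀⟩
  -- the key identity : ρ(ψ, χ) = ρ_J(Φ, fun φ => ρ(φ, χ))
  have key : ∀ χ : X → ℝ≥0∞,
      rho (fun x => ⨅ φ : {φ : X → ℝ≥0∞ // q.IsIdeal φ ∧ q.BoundedWeight φ}, Φ φ + φ.1 x) χ
        = rho Φ (fun φ => rho φ.1 χ) := by
    intro χ
    calc rho (fun x => ⨅ φ : {φ : X → ℝ≥0∞ // q.IsIdeal φ ∧ q.BoundedWeight φ},
            Φ φ + φ.1 x) χ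
        = ⨆ x, ⨆ φ : {φ : X → ℝ≥0∞ // q.IsIdeal φ ∧ q.BoundedWeight φ},
            χ x - (Φ φ + φ.1 x) := by
          refine iSup_congr fun x => ?_
          exact ENNReal.sub_iInf
      _ = ⨆ φ : {φ : X → ℝ≥0∞ // q.IsIdeal φ ∧ q.BoundedWeight φ},
            ⨆ x, χ x - (Φ φ + φ.1 x) := iSup_comm
      _ = ⨆ φ : {φ : X → ℝ≥0∞ // q.IsIdeal φ ∧ q.BoundedWeight φ},
            rho φ.1 χ - Φ φ := by
          refine iSup_congr fun φ => ?_
          rw [rho, ENNReal.iSup_sub]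
          refine iSup_congr fun x => ?_
          rw [add_comm, tsub_add_eq_tsub_tsub]
      _ = rho Φ (fun φ => rho φ.1 χ) := rfl
  -- fhat of a function is a weight on the weight space
  have hfhat : ∀ χ : X → ℝ≥0∞,
      (q.weightSpace fun φ => q.IsIdeal φ ∧ q.BoundedWeight φ).IsWeight
        (fun φ => rho φ.1 χ) := by
    intro χ φ φ'
    calc rho φ.1 χ ≤ rho φ.1 φ'.1 + rho φ'.1 χ := rho_triangle q _ _ _
    _ = rho φ'.1 χ + rho φ.1 φ'.1 := add_comm _ _
  constructor
  · refine ⟨?_, ?_, ?_⟩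
    · -- weight
      intro x y
      have h : (⨅ φ : {φ : X → ℝ≥0∞ // q.IsIdeal φ ∧ q.BoundedWeight φ}, Φ φ + φ.1 y)
          + q.d x y
          = ⨅ φ : {φ : X → ℝ≥0∞ // q.IsIdeal φ ∧ q.BoundedWeight φ},
            (Φ φ + φ.1 y) + q.d x y := ENNReal.iInf_add
      rw [h]
      refine le_iInf fun φ => ?_
      refine (iInf_le _ φ).trans ?_
      rw [add_assoc]
      exact add_le_add le_rfl (φ.2.1.1 x y)
    · -- inf = 0
      have h : (⨅ x, ⨅ φ : {φ : X → ℝ≥0∞ // q.IsIdeal φ ∧ q.BoundedWeight φ}, Φ φ + φ.1 x)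
          = ⨅ φ : {φ : X → ℝ≥0∞ // q.IsIdeal φ ∧ q.BoundedWeight φ}, Φ φ := by
        rw [iInf_comm]
        refine iInf_congr fun φ => ?_
        rw [ENNReal.add_iInf.symm, φ.2.1.2.1, add_zero]
      exact h.trans hΦi.2.1
    · -- min condition
      intro l m hl hm
      have hmin : (fun φ : {φ : X → ℝ≥0∞ // q.IsIdeal φ ∧ q.BoundedWeight φ} =>
          rho φ.1 fun x => min (l x) (m x)) =
          fun φ => min (rho φ.1 l) (rho φ.1 m) := by
        funext φ
        exact φ.2.1.2.2 l m hl hm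
      rw [key, key l, key m, hmin]
      exact hΦi.2.2 _ _ (hfhat l) (hfhat m)
  · -- boundedness
    obtain ⟨r, Ψ₀, hr⟩ := hΦb
    obtain ⟨s, a, hs⟩ := Ψ₀.2.2
    refine ⟨r + s, a, fun x => ?_⟩
    have h : ((r + s : ℝ≥0) : ℝ≥0∞)
        + (⨅ φ : {φ : X → ℝ≥0∞ // q.IsIdeal φ ∧ q.BoundedWeight φ}, Φ φ + φ.1 x)
        = ⨅ φ : {φ : X → ℝ≥0∞ // q.IsIdeal φ ∧ q.BoundedWeight φ},
          ((r + s : ℝ≥0) : ℝ≥0∞) + (Φ φ + φ.1 x) := ENNReal.add_iInf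
    rw [h]
    refine le_iInf fun φ => ?_
    have h1 : Ψ₀.1 x ≤ (Ψ₀.1 x - φ.1 x) + φ.1 x := le_tsub_add
    have h2 : Ψ₀.1 x - φ.1 x ≤ (r : ℝ≥0∞) + Φ φ :=
      le_trans (le_iSup (fun y => Ψ₀.1 y - φ.1 y) x) (hr φ)
    calc q.d x a ≤ (s : ℝ≥0∞) + Ψ₀.1 x := hs x
    _ ≤ (s : ℝ≥0∞) + ((r : ℝ≥0∞) + Φ φ + φ.1 x) :=
        add_le_add le_rfl (h1.trans (add_le_add h2 le_rfl))
    _ = ((r + s : ℝ≥0) : ℝ≥0∞) + (Φ φ + φ.1 x) := by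
        push_cast; ring
end
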